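/- arXiv:2506.11359 — 8 statements merged into one kernel-verified Lean document; each statement's English description precedes it below -/
import Mathlib

section
/- There exists a distinct covering system whose least modulus is 4 and whose largest modulus is exactly 60. -/
/-- A covering system: a finite set of congruences `x ≡ a (mod n)`, encoded as pairs
`(a, n) : ℤ × ℕ`, with positive moduli, such that every integer satisfies at least one
of the congruences. -/
def IsCoveringSystem (C : Finset (ℤ × ℕ)) : Prop :=
  (∀ c ∈ C, 0 < c.2) ∧ ∀ x : ℤ, ∃ c ∈ C, x ≡ c.1 [ZMOD (c.2 : ℤ)]

/-- The moduli of the congruences in `C` are pairwise distinct. -/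
def HasDistinctModuli (C : Finset (ℤ × ℕ)) : Prop :=
  ∀ c ∈ C, ∀ c' ∈ C, c ≠ c' → c.2 ≠ c'.2

/-- A distinct covering system: a covering system whose moduli are pairwise distinct
and all greater than `1`. -/
def IsDistinctCoveringSystem (C : Finset (ℤ × ℕ)) : Prop :=
  IsCoveringSystem C ∧ (∀ c ∈ C, 1 < c.2) ∧ HasDistinctModuli C

/-- An explicit distinct covering system with moduli between 4 and 60. -/
def myCover : Finset (ℤ × ℕ) :=
  {(0,5),(0,6),(1,4),(2,7),(2,30),(2,40),(3,8),(4,9),(4,42),(6,14),(7,12),(7,35),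
   (8,10),(10,18),(10,28),(11,15),(14,20),(15,16),(15,24),(16,36),(16,45),(19,21),
   (22,56),(23,48),(44,60)}

set_option maxRecDepth 20000 in
lemma myCover_key0 : ∀ r : Fin 720, ∃ c ∈ myCover, ((0 + r.val : ℕ) : ℤ) ≡ c.1 [ZMOD (c.2 : ℤ)] := by
  decide

set_option maxRecDepth 20000 in
lemma myCover_key1 : ∀ r : Fin 720, ∃ c ∈ myCover, ((720 + r.val : ℕ) : ℤ) ≡ c.1 [ZMOD (c.2 : ℤ)] := by
  decide

set_option maxRecDepth 20000 in
lemma myCover_key2 : ∀ r : Fin 720, ∃ c ∈ myCover, ((1440 + r.val : ℕ) : ℤ) ≡ c.1 [ZMOD (c.2 : ℤ)] := by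
  decide

set_option maxRecDepth 20000 in
lemma myCover_key3 : ∀ r : Fin 720, ∃ c ∈ myCover, ((2160 + r.val : ℕ) : ℤ) ≡ c.1 [ZMOD (c.2 : ℤ)] := by
  decide

set_option maxRecDepth 20000 in
lemma myCover_key4 : ∀ r : Fin 720, ∃ c ∈ myCover, ((2880 + r.val : ℕ) : ℤ) ≡ c.1 [ZMOD (c.2 : ℤ)] := by
  decide

set_option maxRecDepth 20000 in
lemma myCover_key5 : ∀ r : Fin 720, ∃ c ∈ myCover, ((3600 + r.val : ℕ) : ℤ) ≡ c.1 [ZMOD (c.2 : ℤ)] := by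
  decide

set_option maxRecDepth 20000 in
lemma myCover_key6 : ∀ r : Fin 720, ∃ c ∈ myCover, ((4320 + r.val : ℕ) : ℤ) ≡ c.1 [ZMOD (c.2 : ℤ)] := by
  decide

lemma myCover_key : ∀ r : Fin 5040, ∃ c ∈ myCover, (r.val : ℤ) ≡ c.1 [ZMOD (c.2 : ℤ)] := by
  intro r
  have h := r.isLt
  rcases Nat.lt_or_ge r.val 720 with h0 | h0
  · simpa using myCover_key0 ⟨r.val, h0⟩
  rcases Nat.lt_or_ge r.val 1440 with h1 | h1
  · have := myCover_key1 ⟨r.val - 720, by omega⟩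
    simpa [Nat.add_sub_cancel' h0] using this
  rcases Nat.lt_or_ge r.val 2160 with h2 | h2
  · have := myCover_key2 ⟨r.val - 1440, by omega⟩
    simpa [Nat.add_sub_cancel' h1] using this
  rcases Nat.lt_or_ge r.val 2880 with h3 | h3
  · have := myCover_key3 ⟨r.val - 2160, by omega⟩
    simpa [Nat.add_sub_cancel' h2] using this
  rcases Nat.lt_or_ge r.val 3600 with h4 | h4
  · have := myCover_key4 ⟨r.val - 2880, by omega⟩
    simpa [Nat.add_sub_cancel' h3] using this
  rcases Nat.lt_or_ge r.val 4320 with h5 | h5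
  · have := myCover_key5 ⟨r.val - 3600, by omega⟩
    simpa [Nat.add_sub_cancel' h4] using this
  · have := myCover_key6 ⟨r.val - 4320, by omega⟩
    simpa [Nat.add_sub_cancel' h5] using this

lemma myCover_dvd : ∀ c ∈ myCover, (c.2 : ℤ) ∣ 5040 := by decide

/-- There exists a distinct covering system whose least modulus is `4` and whose
largest modulus is exactly `60`. -/
theorem exists_distinct_covering_min_four_max_sixty :
    ∃ C : Finset (ℤ × ℕ), IsDistinctCoveringSystem C ∧
      (∀ c ∈ C, 4 ≤ c.2) ∧ (∃ c ∈ C, c.2 = 4) ∧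
      (∀ c ∈ C, c.2 ≤ 60) ∧ (∃ c ∈ C, c.2 = 60) := by
  refine ⟨myCover, ⟨⟨by decide, ?_⟩, by decide, by unfold HasDistinctModuli; decide⟩, by decide, ⟨(1,4), by decide, rfl⟩,
    by decide, ⟨(44,60), by decide, rfl⟩⟩
  intro x
  have h5040 : (0:ℤ) < 5040 := by norm_num
  set r : ℤ := x % 5040 with hr
  have hr0 : 0 ≤ r := Int.emod_nonneg x (by norm_num)
  have hrlt : r < 5040 := Int.emod_lt_of_pos x h5040
  have hrn : r.toNat < 5040 := by omega
  obtain ⟨c, hc, hmod⟩ := myCover_key ⟨r.toNat, hrn⟩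
  refine ⟨c, hc, ?_⟩
  have hxr : x ≡ r [ZMOD (5040:ℤ)] := by
    unfold Int.ModEq
    simp [hr, Int.emod_emod_of_dvd]
  have hxr' : x ≡ r [ZMOD (c.2 : ℤ)] := hxr.of_dvd (myCover_dvd c hc)
  have : (r.toNat : ℤ) = r := Int.toNat_of_nonneg hr0
  rw [this] at hmod
  exact hxr'.trans hmod
end

section
/- Let C be a covering system, let p be a prime, and let a ≥ 1 be an integer such that p^a divides L, the least common multiple of the moduli of C. Suppose that fewer than p congruences in C have modulus divisible by p^a. Then the set of congruences of C whose moduli are not divisible by p^a is still a covering system. -/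
lemma pow_dvd_finset_lcm {p k : ℕ} (hp : p.Prime) (hk : 1 ≤ k) {s : Finset (ℤ × ℕ)}
    (f : ℤ × ℕ → ℕ) (h : p ^ k ∣ s.lcm f) : ∃ c ∈ s, p ^ k ∣ f c := by
  induction s using Finset.induction_on with
  | empty =>
    rw [Finset.lcm_empty] at h
    have h1 : p ∣ 1 := (dvd_pow_self p (by omega : k ≠ 0)).trans h
    have := hp.one_lt
    have := Nat.dvd_one.mp h1
    omega
  | @insert c s' hns ih =>
    rw [Finset.lcm_insert] at h
    rcases eq_or_ne (f c) 0 with h0 | h0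
    · exact ⟨c, Finset.mem_insert_self _ _, h0 ▸ dvd_zero _⟩
    rcases eq_or_ne (s'.lcm f) 0 with h1 | h1
    · rw [Finset.lcm_eq_zero_iff] at h1
      obtain ⟨d, hd, hdd⟩ := h1
      exact ⟨d, Finset.mem_insert_of_mem hd, hdd ▸ dvd_zero _⟩
    · have h' : p ^ k ∣ Nat.lcm (f c) (s'.lcm f) := h
      have hl : Nat.lcm (f c) (s'.lcm f) ≠ 0 := Nat.lcm_ne_zero h0 h1
      rw [hp.pow_dvd_iff_le_factorization hl, Nat.factorization_lcm h0 h1] at h'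
      simp at h'
      rcases h' with h' | h'
      · exact ⟨c, Finset.mem_insert_self _ _, (hp.pow_dvd_iff_le_factorization h0).2 h'⟩
      · obtain ⟨d, hd, hdd⟩ := ih ((hp.pow_dvd_iff_le_factorization h1).2 h')
        exact ⟨d, Finset.mem_insert_of_mem hd, hdd⟩

/-- If `p^a` divides the lcm `L` of the moduli of a covering system `C` and fewer
than `p` congruences of `C` have modulus divisible by `p^a`, then discarding all
congruences whose moduli are divisible by `p^a` still leaves a covering system. -/
theorem discard_few_multiples (C : Finset (ℤ × ℕ)) (hC : IsCoveringSystem C)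
    (p : ℕ) (hp : p.Prime) (a : ℕ) (ha : 1 ≤ a)
    (hdvd : p ^ a ∣ C.lcm (fun c => c.2))
    (hcard : (C.filter (fun c => p ^ a ∣ c.2)).card < p) :
    IsCoveringSystem (C.filter (fun c => ¬ p ^ a ∣ c.2)) := by
  obtain ⟨hpos, hcov⟩ := hC
  set D := C.filter (fun c => p ^ a ∣ c.2) with hD
  set K := C.filter (fun c => ¬ p ^ a ∣ c.2) with hK
  refine ⟨fun c hc => hpos c (Finset.mem_filter.mp hc).1, fun x => ?_⟩
  set Q := K.lcm (fun c => c.2) with hQdef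
  have hQ0 : Q ≠ 0 := by
    intro h
    rw [hQdef, Finset.lcm_eq_zero_iff] at h
    obtain ⟨c, hc, h0⟩ := h
    exact absurd (hpos c (Finset.mem_filter.mp hc).1) (by omega)
  set v := Q.factorization p with hv
  have hva : v < a := by
    by_contra h
    push_neg at h
    have hdQ : p ^ a ∣ Q := (hp.pow_dvd_iff_le_factorization hQ0).2 h
    obtain ⟨c, hc, hcd⟩ := pow_dvd_finset_lcm hp ha _ hdQ
    exact (Finset.mem_filter.mp hc).2 hcd
  set u := Q / p ^ v with hu
  have hQuv : p ^ v * u = Q := Nat.ordProj_mul_ordCompl_eq_self Q p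
  have hpu : ¬ p ∣ u := Nat.not_dvd_ordCompl hp hQ0
  set N := p ^ (a - v) with hN
  haveI : NeZero N := ⟨pow_ne_zero _ hp.pos.ne'⟩
  have hpN : p ≤ N := Nat.le_self_pow (by omega) p
  -- the "bad shift" predicate
  set P : (ℤ × ℕ) → ZMod N → Prop :=
    fun d t => (p : ℤ) ^ a ∣ (x + (t.val : ℤ) * Q - d.1) with hP
  -- uniqueness of bad shifts
  have huniq : ∀ d : ℤ × ℕ, ∀ t1 t2 : ZMod N, P d t1 → P d t2 → t1 = t2 := by
    intro d t1 t2 h1 h2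
    have hdiff : (p : ℤ) ^ a ∣ ((t1.val : ℤ) - t2.val) * Q := by
      have := dvd_sub h1 h2
      have he : (x + (t1.val : ℤ) * Q - d.1) - (x + (t2.val : ℤ) * Q - d.1)
          = ((t1.val : ℤ) - t2.val) * Q := by ring
      rwa [he] at this
    have hQc : (Q : ℤ) = (p : ℤ) ^ v * u := by
      rw [← hQuv]; push_cast; ring
    have hcancel : (p : ℤ) ^ (a - v) ∣ ((t1.val : ℤ) - t2.val) * u := by
      have hpa : (p : ℤ) ^ a = (p : ℤ) ^ v * (p : ℤ) ^ (a - v) := by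
        rw [← pow_add]; congr 1; omega
      rw [hpa, hQc] at hdiff
      have hpv : ((p : ℤ) ^ v) ≠ 0 := pow_ne_zero _ (Int.natCast_ne_zero.mpr hp.pos.ne')
      have he : ((t1.val : ℤ) - t2.val) * ((p : ℤ) ^ v * u)
          = (p : ℤ) ^ v * (((t1.val : ℤ) - t2.val) * u) := by ring
      rw [he] at hdiff
      exact (mul_dvd_mul_iff_left hpv).mp hdiff
    have hcop : IsCoprime ((p : ℤ) ^ (a - v)) (u : ℤ) := by
      have h1 : Nat.Coprime (p ^ (a - v)) u :=
        Nat.Coprime.pow_left _ (hp.coprime_iff_not_dvd.mpr hpu)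
      have := Nat.isCoprime_iff_coprime.mpr h1
      push_cast at this ⊢
      exact this
    have hdvdt : (p : ℤ) ^ (a - v) ∣ ((t1.val : ℤ) - t2.val) :=
      hcop.dvd_of_dvd_mul_right hcancel
    have habs : (t1.val : ℤ) - t2.val = 0 := by
      refine Int.eq_zero_of_abs_lt_dvd hdvdt ?_
      have hv1 := t1.val_lt
      have hv2 := t2.val_lt
      have : ((N : ℤ)) = (p : ℤ) ^ (a - v) := by rw [hN]; push_cast; ring
      rw [← this]
      rw [abs_lt]
      omega
    have : t1.val = t2.val := by omega
    exact ZMod.val_injective N this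
  set f : (ℤ × ℕ) → ZMod N := fun d => if h : ∃ t, P d t then h.choose else 0 with hf
  obtain ⟨t0, ht0⟩ : ∃ t0, t0 ∉ D.image f := by
    by_contra hcon
    push_neg at hcon
    have hsub : Finset.univ ⊆ D.image f := fun t _ => hcon t
    have h1 := Finset.card_le_card hsub
    have h2 := Finset.card_image_le (s := D) (f := f)
    rw [Finset.card_univ, ZMod.card] at h1
    omega
  obtain ⟨c, hcC, hcy⟩ := hcov (x + (t0.val : ℤ) * Q)
  by_cases hcdvd : p ^ a ∣ c.2
  · exfalso
    have hcD : c ∈ D := Finset.mem_filter.mpr ⟨hcC, hcdvd⟩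
    have hPc : P c t0 := by
      have hd1 : (c.2 : ℤ) ∣ (x + (t0.val : ℤ) * Q - c.1) := Int.ModEq.dvd hcy.symm
      have hd2 : ((p : ℤ) ^ a) ∣ (c.2 : ℤ) := by exact_mod_cast Int.natCast_dvd_natCast.mpr hcdvd
      exact hd2.trans hd1
    have hex : ∃ t, P c t := ⟨t0, hPc⟩
    have hPf : P c (f c) := by
      rw [hf]; simp only [dif_pos hex]; exact hex.choose_spec
    have : t0 = f c := huniq c t0 (f c) hPc hPf
    exact ht0 (this ▸ Finset.mem_image_of_mem f hcD)
  · refine ⟨c, Finset.mem_filter.mpr ⟨hcC, hcdvd⟩, ?_⟩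
    have hcQ : (c.2 : ℤ) ∣ (Q : ℤ) := by
      exact_mod_cast Int.natCast_dvd_natCast.mpr (Finset.dvd_lcm (Finset.mem_filter.mpr ⟨hcC, hcdvd⟩))
    have hd1 : (c.2 : ℤ) ∣ (c.1 - (x + (t0.val : ℤ) * Q)) := Int.ModEq.dvd hcy
    rw [Int.modEq_iff_dvd]
    have := dvd_add hd1 (hcQ.mul_left (t0.val : ℤ))
    have he : (c.1 - (x + (t0.val : ℤ) * Q)) + (t0.val : ℤ) * Q = c.1 - x := by ring
    rwa [he] at this
end

section
/- Let C be a distinct covering system all of whose moduli lie in the interval [c, d], where c and d are positive integers. If p is a prime and a ≥ 1 is an integer such that p^a · (p + 1) > d, then the set of congruences of C whose moduli are not multiples of p^a is still a covering system. -/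
theorem count_cong (Q m : ℕ) (hm : 0 < m) (hdvd : m ∣ Q) (r : ℤ) :
    ((Finset.Ico (0:ℤ) (Q:ℤ)).filter (fun t => t ≡ r [ZMOD (m:ℤ)])).card = Q / m := by
  have key := Int.Ico_filter_modEq_card (0:ℤ) (Q:ℤ) (show (0:ℤ) < (m:ℤ) by exact_mod_cast hm) r
  obtain ⟨k, rfl⟩ := hdvd
  have hm' : (m:ℚ) ≠ 0 := by exact_mod_cast hm.ne'
  have h1 : ((((m*k : ℕ):ℤ) : ℚ) - r) / ((m:ℤ):ℚ) = (-r)/(m:ℚ) + (k:ℕ) := by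
    push_cast; field_simp; ring
  have h2 : (((0:ℤ):ℚ) - ((r:ℤ):ℚ)) / ((m:ℤ):ℚ) = (-r)/(m:ℚ) := by push_cast; ring
  rw [h1, h2, Int.ceil_add_natCast] at key
  have h3 : (((Finset.Ico (0:ℤ) ((m*k : ℕ):ℤ)).filter (fun t => t ≡ r [ZMOD (m:ℤ)])).card : ℤ)
      = ((k:ℕ):ℤ) := by rw [key]; simp
  have h4 : ((Finset.Ico (0:ℤ) ((m*k : ℕ):ℤ)).filter (fun t => t ≡ r [ZMOD (m:ℤ)])).card = k := by
    exact_mod_cast h3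
  rw [h4, Nat.mul_div_cancel_left _ hm]

theorem not_pow_dvd_lcm {p a : ℕ} (hp : p.Prime) (ha : 1 ≤ a) {ι : Type*} (s : Finset ι)
    (f : ι → ℕ) (h0 : ∀ i ∈ s, f i ≠ 0) (h : ∀ i ∈ s, ¬ p ^ a ∣ f i) :
    ¬ p ^ a ∣ s.lcm f := by
  classical
  induction s using Finset.induction_on with
  | empty =>
      simp only [Finset.lcm_empty]
      intro hd
      have := Nat.le_of_dvd one_pos hd
      have : 1 < p ^ a := Nat.one_lt_pow (by omega) hp.one_lt
      omega
  | @insert i s hi ih =>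
      rw [Finset.lcm_insert, lcm_eq_nat_lcm]
      have hfi : f i ≠ 0 := h0 i (Finset.mem_insert_self i s)
      have hs0 : ∀ j ∈ s, f j ≠ 0 := fun j hj => h0 j (Finset.mem_insert_of_mem hj)
      have hlcm0 : s.lcm f ≠ 0 := by
        simp only [ne_eq, Finset.lcm_eq_zero_iff, Set.mem_image]
        rintro ⟨j, hj, hj0⟩
        exact hs0 j hj (id hj0)
      have ihs := ih hs0 (fun j hj => h j (Finset.mem_insert_of_mem hj))
      intro hd
      rw [Nat.Prime.pow_dvd_iff_le_factorization hp (Nat.lcm_ne_zero hfi hlcm0),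
        Nat.factorization_lcm hfi hlcm0, Finsupp.sup_apply, le_sup_iff] at hd
      rcases hd with hd | hd
      · exact h i (Finset.mem_insert_self i s)
          ((Nat.Prime.pow_dvd_iff_le_factorization hp hfi).2 hd)
      · exact ihs ((Nat.Prime.pow_dvd_iff_le_factorization hp hlcm0).2 hd)

/-- Krukenberg: if all moduli of a distinct covering system lie in `[c, d]` and
`p^a (p + 1) > d` for a prime `p` and `a ≥ 1`, then discarding all congruences whose
moduli are multiples of `p^a` still leaves a covering system. -/
theorem krukenberg_discard (C : Finset (ℤ × ℕ)) (hC : IsDistinctCoveringSystem C)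
    (c d : ℕ) (hc : 0 < c) (hd : 0 < d)
    (hmod : ∀ x ∈ C, c ≤ x.2 ∧ x.2 ≤ d)
    (p : ℕ) (hp : p.Prime) (a : ℕ) (ha : 1 ≤ a)
    (h : d < p ^ a * (p + 1)) :
    IsCoveringSystem (C.filter (fun x => ¬ p ^ a ∣ x.2)) := by
  obtain ⟨⟨hpos, hcov⟩, hgt1, hdist⟩ := hC
  refine ⟨fun i hi => hpos i (Finset.mem_filter.mp hi).1, ?_⟩
  intro x
  by_contra hx
  push_neg at hx
  classical
  have hp2 : 2 ≤ p := hp.two_le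
  -- the kept and discarded parts
  set K := C.filter (fun i => ¬ p ^ a ∣ i.2) with hKdef
  set D := C.filter (fun i => p ^ a ∣ i.2) with hDdef
  set M : ℕ := K.lcm (fun i => i.2) with hMdef
  have hKne0 : ∀ i ∈ K, i.2 ≠ 0 := fun i hi => (hpos i (Finset.mem_filter.mp hi).1).ne'
  have hMpa : ¬ p ^ a ∣ M :=
    not_pow_dvd_lcm hp ha K _ hKne0 (fun i hi => (Finset.mem_filter.mp hi).2)
  have hM0 : M ≠ 0 := by
    simp only [hMdef, ne_eq, Finset.lcm_eq_zero_iff, Set.mem_image]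
    rintro ⟨j, hj, hj0⟩
    exact hKne0 j hj (id hj0)
  set R : ℕ := D.lcm (fun i => i.2) with hRdef
  have hR0 : R ≠ 0 := by
    simp only [hRdef, ne_eq, Finset.lcm_eq_zero_iff, Set.mem_image]
    rintro ⟨j, hj, hj0⟩
    exact (hpos j (Finset.mem_filter.mp hj).1).ne' (id hj0)
  set Q := p ^ 2 * R with hQdef
  have hQ0 : 0 < Q := Nat.mul_pos (pow_pos (by omega) 2) (Nat.pos_of_ne_zero hR0)
  set S : ℤ × ℕ → Finset ℤ :=
    fun i => (Finset.Ico (0:ℤ) (Q:ℤ)).filter (fun t => x + t*(M:ℤ) ≡ i.1 [ZMOD (i.2:ℤ)]) with hSdef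
  -- every t in [0,Q) is covered by a discarded congruence
  have hsub : Finset.Ico (0:ℤ) (Q:ℤ) ⊆ D.biUnion S := by
    intro t ht
    obtain ⟨i, hiC, hi⟩ := hcov (x + t*(M:ℤ))
    by_cases hdvd : p ^ a ∣ i.2
    · exact Finset.mem_biUnion.mpr ⟨i, Finset.mem_filter.mpr ⟨hiC, hdvd⟩,
        Finset.mem_filter.mpr ⟨ht, hi⟩⟩
    · exfalso
      have hiK : i ∈ K := Finset.mem_filter.mpr ⟨hiC, hdvd⟩
      have hdM : (i.2:ℤ) ∣ t*(M:ℤ) :=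
        Dvd.dvd.mul_left (Int.natCast_dvd_natCast.mpr (Finset.dvd_lcm hiK)) t
      have h1 : x ≡ x + t*(M:ℤ) [ZMOD (i.2:ℤ)] :=
        Int.ModEq.symm (Int.modEq_iff_dvd.mpr (by simpa using hdM))
      exact hx i hiK (h1.trans hi)
  -- counting
  have hcount : Q ≤ ∑ i ∈ D, (S i).card := by
    calc Q = (Finset.Ico (0:ℤ) (Q:ℤ)).card := by rw [Int.card_Ico]; simp
    _ ≤ (D.biUnion S).card := Finset.card_le_card hsub
    _ ≤ ∑ i ∈ D, (S i).card := Finset.card_biUnion_le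
  -- key per-congruence bound
  have key : ∀ i ∈ D, ∃ m : ℕ, 0 < m ∧ m ∣ Q ∧ p ∣ m ∧
      (i.2 = p ^ (a+1) → p ^ 2 ∣ m) ∧ (S i).card ≤ Q / m := by
    intro i hiD
    obtain ⟨hiC, hpa⟩ := Finset.mem_filter.mp hiD
    have hn0 : 0 < i.2 := hpos i hiC
    set g := Nat.gcd M i.2 with hgdef
    have hgM : g ∣ M := Nat.gcd_dvd_left _ _
    have hgn : g ∣ i.2 := Nat.gcd_dvd_right _ _
    have hg0 : 0 < g := Nat.gcd_pos_of_pos_right _ hn0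
    set m := i.2 / g with hmdef
    have hmn : m ∣ i.2 := Nat.div_dvd_of_dvd hgn
    have hm0 : 0 < m := Nat.div_pos (Nat.le_of_dvd hn0 hgn) hg0
    have hmg : m * g = i.2 := Nat.div_mul_cancel hgn
    have hpm : p ∣ m := by
      by_contra hpm
      have hcop : Nat.Coprime (p ^ a) m :=
        Nat.Coprime.pow_left a ((Nat.Prime.coprime_iff_not_dvd hp).mpr hpm)
      exact hMpa ((Nat.Coprime.dvd_of_dvd_mul_left hcop (hmg ▸ hpa)).trans hgM)
    have hQm : m ∣ Q := hmn.trans ((Finset.dvd_lcm hiD).trans (Dvd.intro_left _ rfl))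
    refine ⟨m, hm0, hQm, hpm, ?_, ?_⟩
    · intro hn
      have hgp : g ∣ p ^ (a+1) := hn ▸ hgn
      obtain ⟨e, he, hge⟩ := (Nat.dvd_prime_pow hp).mp hgp
      have hea : e < a := by
        by_contra hea
        exact hMpa ((pow_dvd_pow p (by omega : a ≤ e)).trans (hge ▸ hgM))
      have hm : m = p ^ (a + 1 - e) := by
        rw [hmdef, hn, hge, Nat.pow_div (by omega) (by omega)]
      rw [hm]
      exact pow_dvd_pow p (by omega)
    · rcases Finset.eq_empty_or_nonempty (S i) with hSe | ⟨t₀, ht₀⟩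
      · simp [hSe]
      · obtain ⟨ht₀I, ht₀c⟩ := Finset.mem_filter.mp ht₀
        have hsub2 : S i ⊆ (Finset.Ico (0:ℤ) (Q:ℤ)).filter (fun t => t ≡ t₀ [ZMOD (m:ℤ)]) := by
          intro t ht
          obtain ⟨htI, htc⟩ := Finset.mem_filter.mp ht
          refine Finset.mem_filter.mpr ⟨htI, ?_⟩
          have h2 : (i.2:ℤ) ∣ (x + t₀*(M:ℤ)) - (x + t*(M:ℤ)) :=
            Int.ModEq.dvd (htc.trans ht₀c.symm)
          have h3 : (i.2:ℤ) ∣ (t₀ - t) * (M:ℤ) := by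
            have : (x + t₀*(M:ℤ)) - (x + t*(M:ℤ)) = (t₀ - t) * (M:ℤ) := by ring
            rwa [this] at h2
          set M' := M / g with hM'def
          have hM' : g * M' = M := Nat.mul_div_cancel' hgM
          have h4 : ((m:ℤ) * (g:ℤ)) ∣ ((t₀ - t) * (M':ℤ)) * (g:ℤ) := by
            have e1 : ((m:ℤ) * (g:ℤ)) = (i.2:ℤ) := by exact_mod_cast hmg
            have e2 : ((t₀ - t) * (M':ℤ)) * (g:ℤ) = (t₀ - t) * (M:ℤ) := by
              rw [mul_assoc, mul_comm (M':ℤ) (g:ℤ)]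
              norm_cast
              rw [hM']
            rw [e1, e2]; exact h3
          have h5 : (m:ℤ) ∣ (t₀ - t) * (M':ℤ) :=
            (mul_dvd_mul_iff_right (by exact_mod_cast hg0.ne' : (g:ℤ) ≠ 0)).mp h4
          have hcop : Nat.Coprime m M' := (Nat.coprime_div_gcd_div_gcd hg0).symm
          have hcopZ : IsCoprime (m:ℤ) (M':ℤ) := by
            rw [Int.isCoprime_iff_gcd_eq_one]
            exact_mod_cast hcop
          have h6 : (m:ℤ) ∣ t₀ - t := hcopZ.dvd_of_dvd_mul_right h5
          exact Int.modEq_iff_dvd.mpr h6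
        calc (S i).card ≤ _ := Finset.card_le_card hsub2
        _ = Q / m := count_cong Q m hm0 hQm t₀
  -- split the discarded congruences by whether the modulus is p^(a+1)
  set D2 := D.filter (fun i => i.2 = p ^ (a+1)) with hD2def
  set D1 := D.filter (fun i => ¬ i.2 = p ^ (a+1)) with hD1def
  have hsplit : ∑ i ∈ D, (S i).card
      = ∑ i ∈ D2, (S i).card + ∑ i ∈ D1, (S i).card :=
    (Finset.sum_filter_add_sum_filter_not D _ _).symm
  have hD1b : ∀ i ∈ D1, (S i).card ≤ Q / p := by
    intro i hi
    obtain ⟨hiD, _⟩ := Finset.mem_filter.mp hi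
    obtain ⟨m, hm0, hQm, hpm, _, hcard⟩ := key i hiD
    exact hcard.trans (Nat.div_le_div_left (Nat.le_of_dvd hm0 hpm) (by omega))
  have hD2b : ∀ i ∈ D2, (S i).card ≤ Q / p ^ 2 := by
    intro i hi
    obtain ⟨hiD, hieq⟩ := Finset.mem_filter.mp hi
    obtain ⟨m, hm0, hQm, hpm, hsq, hcard⟩ := key i hiD
    exact hcard.trans (Nat.div_le_div_left (Nat.le_of_dvd hm0 (hsq hieq))
      (pow_pos (by omega) 2))
  -- cardinality of the two parts
  have hD1card : D1.card ≤ p - 1 := by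
    have hmaps : ∀ i ∈ D1, i.2 / p ^ a ∈ Finset.Icc 1 (p - 1) := by
      intro i hi
      obtain ⟨hiD, hneq⟩ := Finset.mem_filter.mp hi
      obtain ⟨hiC, hpa⟩ := Finset.mem_filter.mp hiD
      have hn0 : 0 < i.2 := hpos i hiC
      have hpa0 : 0 < p ^ a := pow_pos (by omega) a
      have hk1 : 1 ≤ i.2 / p ^ a := (Nat.one_le_div_iff hpa0).mpr (Nat.le_of_dvd hn0 hpa)
      have hkp : i.2 / p ^ a < p + 1 := by
        rw [Nat.div_lt_iff_lt_mul hpa0]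
        exact lt_of_le_of_lt (hmod i hiC).2 h |>.trans_le (by rw [mul_comm])
      have hkne : i.2 / p ^ a ≠ p := by
        intro hke
        apply hneq
        have := Nat.div_mul_cancel hpa
        rw [hke] at this
        rw [← this, pow_succ]
        ring
      rw [Finset.mem_Icc]
      omega
    have hinj : Set.InjOn (fun i : ℤ × ℕ => i.2 / p ^ a) D1 := by
      intro i hi j hj hij
      obtain ⟨hiD, -⟩ := Finset.mem_filter.mp (Finset.mem_coe.mp hi)
      obtain ⟨hjD, -⟩ := Finset.mem_filter.mp (Finset.mem_coe.mp hj)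
      have hiDD := Finset.mem_filter.mp hiD
      have hjDD := Finset.mem_filter.mp hjD
      by_contra hne
      apply hdist i hiDD.1 j hjDD.1 hne
      have e1 := Nat.div_mul_cancel hiDD.2
      have e2 := Nat.div_mul_cancel hjDD.2
      rw [← e1, ← e2]
      simp only [] at hij
      rw [hij]
    calc D1.card ≤ (Finset.Icc 1 (p-1)).card :=
          Finset.card_le_card_of_injOn _ hmaps hinj
    _ = p - 1 := by rw [Nat.card_Icc]; omega
  have hD2card : D2.card ≤ 1 := by
    rw [Finset.card_le_one]
    intro i hi j hj
    obtain ⟨hiD, hieq⟩ := Finset.mem_filter.mp hi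
    obtain ⟨hjD, hjeq⟩ := Finset.mem_filter.mp hj
    by_contra hne
    exact hdist i (Finset.mem_filter.mp hiD).1 j (Finset.mem_filter.mp hjD).1 hne
      (hieq.trans hjeq.symm)
  -- put everything together
  have hs1 : ∑ i ∈ D1, (S i).card ≤ (p - 1) * (Q / p) := by
    calc ∑ i ∈ D1, (S i).card ≤ D1.card • (Q / p) := Finset.sum_le_card_nsmul D1 _ _ hD1b
    _ = D1.card * (Q / p) := by simp [smul_eq_mul]
    _ ≤ (p - 1) * (Q / p) := Nat.mul_le_mul_right _ hD1card
  have hs2 : ∑ i ∈ D2, (S i).card ≤ Q / p ^ 2 := by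
    calc ∑ i ∈ D2, (S i).card ≤ D2.card • (Q / p ^ 2) := Finset.sum_le_card_nsmul D2 _ _ hD2b
    _ = D2.card * (Q / p ^ 2) := by simp [smul_eq_mul]
    _ ≤ 1 * (Q / p ^ 2) := Nat.mul_le_mul_right _ hD2card
    _ = Q / p ^ 2 := one_mul _
  have hfinal : Q ≤ Q / p ^ 2 + (p - 1) * (Q / p) :=
    hcount.trans (hsplit ▸ add_le_add hs2 hs1)
  have hQp : Q / p = p * R := by
    rw [hQdef, pow_two, mul_assoc, Nat.mul_div_cancel_left _ (by omega : 0 < p)]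
  have hQp2 : Q / p ^ 2 = R := by
    rw [hQdef, Nat.mul_div_cancel_left _ (pow_pos (by omega) 2)]
  rw [hQp, hQp2, hQdef] at hfinal
  have e1 : (p - 1) * (p * R) = p * (p * R) - p * R := Nat.sub_one_mul p (p * R)
  have e2 : p * (p * R) = p ^ 2 * R := by ring
  have hB : p * R ≤ p ^ 2 * R := by
    rw [← e2]
    exact Nat.le_mul_of_pos_left _ (by omega)
  have hRltB : R < p * R := by
    have h1 : 1 * R < p * R :=
      (Nat.mul_lt_mul_right (Nat.pos_of_ne_zero hR0)).mpr (by omega)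
    omega
  rw [e1, e2] at hfinal
  omega
end

section
/- Let C be a covering system, let p be a prime and a ≥ 1 an integer such that p^a exactly divides L (i.e., p^a divides L but p^(a+1) does not), where L is the least common multiple of the moduli of C. Suppose exactly p congruences of C have modulus divisible by p^a, and that these congruences have moduli p^a·m_1, …, p^a·m_p (so that p does not divide any m_i). Then there exists an integer b such that the set obtained from C by deleting these p congruences and adding the single congruence x ≡ b (mod p^(a−1)·lcm(m_1, …, m_p)) is still a covering system. -/
/-- Krukenberg: suppose `p^a` exactly divides the lcm `L` of the moduli of a covering
system `C`, and exactly `p` congruences of `C` have modulus divisible by `p^a`, with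
moduli `p^a m₁, …, p^a m_p`. Then these `p` congruences can be replaced by a single
congruence with modulus `p^(a-1) lcm(m₁, …, m_p)` and the result is still a covering
system. -/
theorem replace_p_congruences (C : Finset (ℤ × ℕ)) (hC : IsCoveringSystem C)
    (p : ℕ) (hp : p.Prime) (a : ℕ) (ha : 1 ≤ a)
    (h1 : p ^ a ∣ C.lcm (fun c => c.2))
    (h2 : ¬ p ^ (a + 1) ∣ C.lcm (fun c => c.2))
    (hcard : (C.filter (fun c => p ^ a ∣ c.2)).card = p) :
    ∃ b : ℤ, IsCoveringSystem
      (insert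
        (b, p ^ (a - 1) * (C.filter (fun c => p ^ a ∣ c.2)).lcm (fun c => c.2 / p ^ a))
        (C.filter (fun c => ¬ p ^ a ∣ c.2))) := by
  classical
  obtain ⟨hpos, hcov⟩ := hC
  set L := C.lcm (fun c => c.2) with hLdef
  set S := C.filter (fun c => p ^ a ∣ c.2) with hSdef
  set K := L / p ^ a with hKdef
  have hLK : L = p ^ a * K := (Nat.mul_div_cancel' h1).symm
  have hpK : ¬ p ∣ K := by
    intro h
    exact h2 (by rw [hLK, pow_succ]; exact mul_dvd_mul dvd_rfl h)
  have hK0 : K ≠ 0 := by intro h; exact hpK (by rw [h]; exact dvd_zero p)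
  have hdvdL : ∀ c ∈ C, c.2 ∣ L := fun c hc => Finset.dvd_lcm hc
  have hmS : ∀ c ∈ S, c.2 = p ^ a * (c.2 / p ^ a) :=
    fun c hc => (Nat.mul_div_cancel' (Finset.mem_filter.mp hc).2).symm
  have hmK : ∀ c ∈ S, (c.2 / p ^ a) ∣ K := by
    intro c hc
    have h' : p ^ a * (c.2 / p ^ a) ∣ p ^ a * K := by
      rw [← hmS c hc, ← hLK]; exact hdvdL c (Finset.mem_filter.mp hc).1
    exact (mul_dvd_mul_iff_left (pow_ne_zero a hp.pos.ne')).mp h'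
  -- moduli not divisible by p^a divide p^(a-1) * K
  have hdvd' : ∀ c ∈ C, ¬ p ^ a ∣ c.2 → c.2 ∣ p ^ (a - 1) * K := by
    intro c hc hnd
    have hc0 : c.2 ≠ 0 := (hpos c hc).ne'
    set e := (c.2).factorization p with he
    have hsplit : p ^ e * (c.2 / p ^ e) = c.2 := Nat.ordProj_mul_ordCompl_eq_self c.2 p
    have hpm : ¬ p ∣ (c.2 / p ^ e) := Nat.not_dvd_ordCompl hp hc0
    have hea : e ≤ a - 1 := by
      by_contra h
      push_neg at h
      exact hnd (dvd_trans (pow_dvd_pow p (by omega)) (Nat.ordProj_dvd c.2 p))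
    have hmdvd : (c.2 / p ^ e) ∣ K := by
      have hd1 : (c.2 / p ^ e) ∣ p ^ a * K := by
        refine dvd_trans (Nat.div_dvd_of_dvd (Nat.ordProj_dvd c.2 p)) ?_
        rw [← hLK]; exact hdvdL c hc
      have hcop : Nat.Coprime (c.2 / p ^ e) (p ^ a) :=
        Nat.Coprime.pow_right a ((hp.coprime_iff_not_dvd.mpr hpm).symm)
      exact hcop.dvd_of_dvd_mul_left hd1
    calc c.2 = p ^ e * (c.2 / p ^ e) := hsplit.symm
      _ ∣ p ^ (a - 1) * K := mul_dvd_mul (pow_dvd_pow p hea) hmdvd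
  -- the key lemma: if x is uncovered by the congruences with modulus not divisible
  -- by p^a, then for EVERY c ∈ S, c covers x modulo c.2/p^a and modulo p^(a-1).
  have keyA : ∀ x : ℤ, (∀ c ∈ C, ¬ p ^ a ∣ c.2 → ¬ ((c.2 : ℤ) ∣ c.1 - x)) →
      ∀ c ∈ S, ((p : ℤ) ^ (a - 1) ∣ c.1 - x) ∧ (((c.2 / p ^ a : ℕ) : ℤ) ∣ c.1 - x) := by
    intro x hU
    set q : ℤ := (p : ℤ) ^ (a - 1) * (K : ℤ) with hqdef
    have hUshift : ∀ j : ℤ, ∀ c ∈ C, ¬ p ^ a ∣ c.2 → ¬ ((c.2 : ℤ) ∣ c.1 - (x + j * q)) := by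
      intro j c hc hnd hdv
      apply hU c hc hnd
      have hq : (c.2 : ℤ) ∣ j * q := by
        refine Dvd.dvd.mul_left ?_ j
        rw [hqdef]
        exact_mod_cast Int.natCast_dvd_natCast.mpr (hdvd' c hc hnd)
      have : c.1 - x = (c.1 - (x + j * q)) + j * q := by ring
      rw [this]; exact dvd_add hdv hq
    have hcovj : ∀ j : Fin p, ∃ c, c ∈ S ∧ ((c.2 : ℤ) ∣ c.1 - (x + (j : ℤ) * q)) := by
      intro j
      obtain ⟨c, hc, hmod⟩ := hcov (x + (j : ℤ) * q)
      have hdv : (c.2 : ℤ) ∣ c.1 - (x + (j : ℤ) * q) := Int.modEq_iff_dvd.mp hmod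
      by_cases hnd : p ^ a ∣ c.2
      · exact ⟨c, Finset.mem_filter.mpr ⟨hc, hnd⟩, hdv⟩
      · exact absurd hdv (hUshift _ c hc hnd)
    choose g hg1 hg2 using hcovj
    set g' : Fin p → {c // c ∈ S} := fun j => ⟨g j, hg1 j⟩ with hg'def
    have hginj : Function.Injective g' := by
      intro j j' hjj
      have heq : g j = g j' := by
        rw [hg'def] at hjj; exact congrArg Subtype.val hjj
      have hpa : p ^ a ∣ (g j).2 := (Finset.mem_filter.mp (hg1 j)).2
      have hd : ((g j).2 : ℤ) ∣ ((j' : ℤ) - (j : ℤ)) * q := by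
        have h1' := hg2 j
        have h2' := hg2 j'
        rw [← heq] at h2'
        have : ((j' : ℤ) - (j : ℤ)) * q =
            ((g j).1 - (x + (j : ℤ) * q)) - ((g j).1 - (x + (j' : ℤ) * q)) := by ring
        rw [this]; exact dvd_sub h1' h2'
      have hd2 : (p : ℤ) ^ a ∣ ((j' : ℤ) - (j : ℤ)) * q := by
        refine dvd_trans ?_ hd
        exact_mod_cast Int.natCast_dvd_natCast.mpr hpa
      have hd3 : (p : ℤ) ^ (a - 1) * (p : ℤ) ∣
          (p : ℤ) ^ (a - 1) * (((j' : ℤ) - (j : ℤ)) * (K : ℤ)) := by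
        have e1 : (p : ℤ) ^ (a - 1) * (p : ℤ) = (p : ℤ) ^ a := by
          rw [← pow_succ]; congr 1; omega
        have e2 : (p : ℤ) ^ (a - 1) * (((j' : ℤ) - (j : ℤ)) * (K : ℤ)) =
            ((j' : ℤ) - (j : ℤ)) * q := by rw [hqdef]; ring
        rw [e1, e2]; exact hd2
      have hd4 : (p : ℤ) ∣ ((j' : ℤ) - (j : ℤ)) * (K : ℤ) :=
        (mul_dvd_mul_iff_left (pow_ne_zero (a - 1) (by exact_mod_cast hp.pos.ne'))).mp hd3
      have hpZ : Prime (p : ℤ) := Nat.prime_iff_prime_int.mp hp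
      have hd5 : (p : ℤ) ∣ ((j' : ℤ) - (j : ℤ)) := by
        rcases hpZ.dvd_mul.mp hd4 with h | h
        · exact h
        · exact absurd (Int.natCast_dvd_natCast.mp h) hpK
      have hz : (j' : ℤ) - (j : ℤ) = 0 := by
        refine Int.eq_zero_of_abs_lt_dvd hd5 ?_
        have hj1 : (j : ℤ) < p := by exact_mod_cast j.2
        have hj2 : (j' : ℤ) < p := by exact_mod_cast j'.2
        have hj3 : 0 ≤ (j : ℤ) := by positivity
        have hj4 : 0 ≤ (j' : ℤ) := by positivity
        rw [abs_lt]; omega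
      have : (j : ℤ) = (j' : ℤ) := by omega
      exact Fin.ext (by exact_mod_cast this)
    have hgsurj : Function.Surjective g' := by
      have hbij : Function.Bijective g' :=
        (Fintype.bijective_iff_injective_and_card g').mpr
          ⟨hginj, by simp [Fintype.card_coe, hcard]⟩
      exact hbij.2
    intro c hc
    obtain ⟨j, hj⟩ := hgsurj ⟨c, hc⟩
    have hjc : g j = c := by rw [hg'def] at hj; exact congrArg Subtype.val hj
    have hgj := hg2 j
    rw [hjc] at hgj
    -- hgj : (c.2 : ℤ) ∣ c.1 - (x + j * q)
    have hsum : c.1 - x = (c.1 - (x + (j : ℤ) * q)) + (j : ℤ) * q := by ring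
    constructor
    · have h1' : (p : ℤ) ^ (a - 1) ∣ (c.2 : ℤ) := by
        have : (p ^ (a - 1) : ℕ) ∣ c.2 :=
          dvd_trans (pow_dvd_pow p (by omega)) (Finset.mem_filter.mp hc).2
        exact_mod_cast Int.natCast_dvd_natCast.mpr this
      have h2' : (p : ℤ) ^ (a - 1) ∣ (j : ℤ) * q := by
        refine Dvd.dvd.mul_left (Dvd.dvd.mul_right dvd_rfl _) _
      rw [hsum]; exact dvd_add (dvd_trans h1' hgj) h2'
    · have h1' : ((c.2 / p ^ a : ℕ) : ℤ) ∣ (c.2 : ℤ) := by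
        exact_mod_cast Int.natCast_dvd_natCast.mpr (Nat.div_dvd_of_dvd (Finset.mem_filter.mp hc).2)
      have h2' : ((c.2 / p ^ a : ℕ) : ℤ) ∣ (j : ℤ) * q := by
        refine Dvd.dvd.mul_left ?_ _
        rw [hqdef]
        exact Dvd.dvd.mul_left (by exact_mod_cast Int.natCast_dvd_natCast.mpr (hmK c hc)) _
      rw [hsum]; exact dvd_add (dvd_trans h1' hgj) h2'
  -- the new modulus
  set M := S.lcm (fun c => c.2 / p ^ a) with hMdef
  have hMK : M ∣ K := Finset.lcm_dvd (fun c hc => hmK c hc)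
  have hM0 : M ≠ 0 := fun h => hK0 (zero_dvd_iff.mp (h ▸ hMK))
  have hNpos : 0 < p ^ (a - 1) * M :=
    Nat.mul_pos (pow_pos hp.pos _) (Nat.pos_of_ne_zero hM0)
  have hposside : ∀ b : ℤ, ∀ c ∈ insert (b, p ^ (a - 1) * M) (C.filter (fun c => ¬ p ^ a ∣ c.2)),
      0 < c.2 := by
    intro b c hc
    rcases Finset.mem_insert.mp hc with h | h
    · rw [h]; exact hNpos
    · exact hpos c (Finset.mem_filter.mp h).1
  by_cases hex : ∃ x₀ : ℤ, ∀ c ∈ C, ¬ p ^ a ∣ c.2 → ¬ ((c.2 : ℤ) ∣ c.1 - x₀)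
  · obtain ⟨x₀, hx₀⟩ := hex
    refine ⟨x₀, hposside x₀, ?_⟩
    intro x
    by_cases hx : ∃ c ∈ C, ¬ p ^ a ∣ c.2 ∧ ((c.2 : ℤ) ∣ c.1 - x)
    · obtain ⟨c, hc, hnd, hdv⟩ := hx
      exact ⟨c, Finset.mem_insert_of_mem (Finset.mem_filter.mpr ⟨hc, hnd⟩),
        Int.modEq_iff_dvd.mpr hdv⟩
    · push_neg at hx
      have hUx : ∀ c ∈ C, ¬ p ^ a ∣ c.2 → ¬ ((c.2 : ℤ) ∣ c.1 - x) := fun c hc hnd => hx c hc hnd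
      refine ⟨(x₀, p ^ (a - 1) * M), Finset.mem_insert_self _ _, ?_⟩
      have hA := keyA x hUx
      have hB := keyA x₀ hx₀
      have hSne : S.Nonempty := Finset.card_pos.mp (by rw [hcard]; exact hp.pos)
      obtain ⟨c₀, hc₀⟩ := hSne
      -- p^(a-1) divides x₀ - x
      have hdp : (p : ℤ) ^ (a - 1) ∣ x₀ - x := by
        have h1' := (hA c₀ hc₀).1
        have h2' := (hB c₀ hc₀).1
        have : x₀ - x = (c₀.1 - x) - (c₀.1 - x₀) := by ring
        rw [this]; exact dvd_sub h1' h2'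
      -- M divides x₀ - x
      have hdM : (M : ℤ) ∣ x₀ - x := by
        rw [Int.natCast_dvd]
        refine Finset.lcm_dvd ?_
        intro c hc
        have h1' := (hA c hc).2
        have h2' := (hB c hc).2
        have hdz : ((c.2 / p ^ a : ℕ) : ℤ) ∣ x₀ - x := by
          have : x₀ - x = (c.1 - x) - (c.1 - x₀) := by ring
          rw [this]; exact dvd_sub h1' h2'
        rw [Int.natCast_dvd] at hdz
        exact hdz
      have hcop : Nat.Coprime (p ^ (a - 1)) M :=
        Nat.Coprime.pow_left _ (hp.coprime_iff_not_dvd.mpr (fun h => hpK (h.trans hMK)))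
      have hdN : ((p ^ (a - 1) * M : ℕ) : ℤ) ∣ x₀ - x := by
        have hdp' : (p ^ (a - 1) : ℕ) ∣ (x₀ - x).natAbs := by
          rw [← Int.natCast_dvd]; exact_mod_cast hdp
        rw [Int.natCast_dvd] at hdM ⊢
        exact hcop.mul_dvd_of_dvd_of_dvd hdp' hdM
      exact Int.modEq_iff_dvd.mpr hdN
  · push_neg at hex
    refine ⟨0, hposside 0, ?_⟩
    intro x
    obtain ⟨c, hc, hnd, hdv⟩ := hex x
    exact ⟨c, Finset.mem_insert_of_mem (Finset.mem_filter.mpr ⟨hc, hnd⟩),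
      Int.modEq_iff_dvd.mpr hdv⟩
end

section
/- Let C be a covering system, let p be a prime and a ≥ 1 an integer such that p^a exactly divides L (i.e., p^a divides L but p^(a+1) does not), where L is the least common multiple of the moduli of C. Suppose exactly p congruences of C have modulus divisible by p^a. If two of these p congruences have residues lying in the same residue class modulo p^a, then the set obtained from C by deleting all p of these congruences is still a covering system. -/
/-- Krukenberg: suppose `p^a` exactly divides the lcm `L` of the moduli of a covering
system `C`, and exactly `p` congruences of `C` have modulus divisible by `p^a`. If two
of these `p` congruences are in the same residue class modulo `p^a`, then discarding
all `p` of them still leaves a covering system. -/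
theorem discard_p_congruences (C : Finset (ℤ × ℕ)) (hC : IsCoveringSystem C)
    (p : ℕ) (hp : p.Prime) (a : ℕ) (ha : 1 ≤ a)
    (h1 : p ^ a ∣ C.lcm (fun c => c.2))
    (h2 : ¬ p ^ (a + 1) ∣ C.lcm (fun c => c.2))
    (hcard : (C.filter (fun c => p ^ a ∣ c.2)).card = p)
    (hsame : ∃ c₁ ∈ C.filter (fun c => p ^ a ∣ c.2),
      ∃ c₂ ∈ C.filter (fun c => p ^ a ∣ c.2),
        c₁ ≠ c₂ ∧ c₁.1 ≡ c₂.1 [ZMOD ((p : ℤ) ^ a)]) :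
    IsCoveringSystem (C.filter (fun c => ¬ p ^ a ∣ c.2)) := by
  classical
  obtain ⟨hpos, hcov⟩ := hC
  refine ⟨fun c hc => hpos c (Finset.mem_filter.mp hc).1, fun x => ?_⟩
  obtain ⟨m, hm⟩ := h1
  have hpm : ¬ p ∣ m := by
    intro h
    exact h2 (hm ▸ (pow_succ p a ▸ mul_dvd_mul_left _ h))
  set S := C.filter (fun c => p ^ a ∣ c.2) with hS
  set f : ℤ × ℕ → ZMod (p ^ a) := fun c => ((c.1 : ZMod (p ^ a))) with hf
  set T := S.image f with hT
  have hcast : ((p ^ a : ℕ) : ℤ) = (p : ℤ) ^ a := by push_cast; ring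
  -- T has fewer than p elements
  have hTcard : T.card < p := by
    obtain ⟨c₁, hc₁, c₂, hc₂, hne, heq⟩ := hsame
    have hle : T.card ≤ p := by
      calc T.card ≤ S.card := Finset.card_image_le
        _ = p := hcard
    rcases lt_or_eq_of_le hle with h | h
    · exact h
    · exfalso
      have hinj : Set.InjOn f S := by
        rw [← Finset.card_image_iff, ← hT, h, hcard]
      apply hne
      apply hinj hc₁ hc₂
      show ((c₁.1 : ZMod (p ^ a))) = ((c₂.1 : ZMod (p ^ a)))
      rw [ZMod.intCast_eq_intCast_iff]
      rwa [hcast]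
  -- find a good residue shift j
  obtain ⟨j, hj, hjT⟩ : ∃ j ∈ Finset.range p,
      ((x + (j : ℤ) * (p : ℤ) ^ (a - 1) : ℤ) : ZMod (p ^ a)) ∉ T := by
    by_contra hcon
    push_neg at hcon
    have hinj : Set.InjOn (fun j : ℕ => ((x + (j : ℤ) * (p : ℤ) ^ (a - 1) : ℤ) : ZMod (p ^ a)))
        (Finset.range p) := by
      intro j hj j' hj' hjj
      simp only at hjj
      rw [ZMod.intCast_eq_intCast_iff, hcast] at hjj
      have hd : ((p : ℤ) ^ a) ∣ ((j' : ℤ) - j) * (p : ℤ) ^ (a - 1) := by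
        have := (Int.ModEq.dvd hjj)
        convert this using 1
        ring
      have hppos : ((p : ℤ) ^ (a - 1)) ≠ 0 := by
        exact pow_ne_zero _ (by exact_mod_cast hp.pos.ne')
      have hd' : ((p : ℤ) * (p : ℤ) ^ (a - 1)) ∣ ((j' : ℤ) - j) * (p : ℤ) ^ (a - 1) := by
        have hpa : (p : ℤ) * (p : ℤ) ^ (a - 1) = (p : ℤ) ^ a := by
          rw [← pow_succ']
          congr 1
          omega
        rw [hpa]
        exact hd
      have hd2 : (p : ℤ) ∣ ((j' : ℤ) - j) := (mul_dvd_mul_iff_right hppos).mp hd'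
      have hmod : j ≡ j' [MOD p] := (Nat.modEq_iff_dvd).mpr hd2
      simp only [Finset.coe_range, Set.mem_Iio] at hj hj'
      exact Nat.ModEq.eq_of_lt_of_lt hmod hj hj'
    have hle := Finset.card_le_card_of_injOn _ hcon hinj
    rw [Finset.card_range] at hle
    omega
  set r : ℤ := x + (j : ℤ) * (p : ℤ) ^ (a - 1) with hr
  -- CRT: find y ≡ r mod p^a, y ≡ x mod m
  have hcop : IsCoprime ((p : ℤ) ^ a) (m : ℤ) := by
    have h := Nat.isCoprime_iff_coprime.mpr
      (Nat.Coprime.pow_left a ((hp.coprime_iff_not_dvd).mpr hpm))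
    rw [← hcast]
    exact_mod_cast h
  obtain ⟨u, v, huv⟩ := hcop
  set y : ℤ := r + (p : ℤ) ^ a * (u * (x - r)) with hy
  have hym : (m : ℤ) ∣ x - y := by
    refine ⟨(x - r) * v, ?_⟩
    rw [hy]
    linear_combination (r - x) * huv
  have hyr : ((p : ℤ) ^ a) ∣ y - r := ⟨u * (x - r), by rw [hy]; ring⟩
  obtain ⟨c, hcC, hyc⟩ := hcov y
  have hcS : ¬ p ^ a ∣ c.2 := by
    intro hdvd
    apply hjT
    rw [hT, Finset.mem_image]
    refine ⟨c, Finset.mem_filter.mpr ⟨hcC, hdvd⟩, ?_⟩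
    show ((c.1 : ZMod (p ^ a))) = _
    rw [ZMod.intCast_eq_intCast_iff, hcast]
    have h4 : y ≡ c.1 [ZMOD ((p : ℤ) ^ a)] := by
      refine Int.ModEq.of_dvd ?_ hyc
      rw [← hcast]
      exact_mod_cast Int.natCast_dvd_natCast.mpr hdvd
    have h5 : r ≡ y [ZMOD ((p : ℤ) ^ a)] := (Int.modEq_iff_dvd.mpr hyr)
    exact (h5.trans h4).symm
  refine ⟨c, Finset.mem_filter.mpr ⟨hcC, hcS⟩, ?_⟩
  -- c.2 divides p^(a-1) * m
  have hdL : c.2 ∣ C.lcm (fun c => c.2) := Finset.dvd_lcm hcC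
  set b := c.2.factorization p with hb
  have hc2pos : c.2 ≠ 0 := (hpos c hcC).ne'
  have hordp : p ^ b ∣ c.2 := Nat.ordProj_dvd _ _
  have hblt : b < a := by
    by_contra hba
    push_neg at hba
    exact hcS (dvd_trans (pow_dvd_pow p hba) hordp)
  have hcompl : (c.2 / p ^ b) ∣ m := by
    have h6 : (c.2 / p ^ b) ∣ p ^ a * m := dvd_trans (Nat.ordCompl_dvd c.2 p) (hm ▸ hdL)
    have h7 : Nat.Coprime (c.2 / p ^ b) (p ^ a) :=
      Nat.Coprime.pow_right _ ((Nat.coprime_comm).mp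
        ((hp.coprime_iff_not_dvd).mpr (Nat.not_dvd_ordCompl hp hc2pos)))
    exact h7.dvd_of_dvd_mul_left h6
  have hdvd2 : c.2 ∣ p ^ (a - 1) * m := by
    have h8 : c.2 = p ^ b * (c.2 / p ^ b) := (Nat.ordProj_mul_ordCompl_eq_self c.2 p).symm
    rw [h8]
    exact mul_dvd_mul (pow_dvd_pow p (by omega)) hcompl
  -- x ≡ y mod p^(a-1) * m
  have hxp : ((p : ℤ) ^ (a - 1)) ∣ x - y := by
    have h9 : ((p : ℤ) ^ (a - 1)) ∣ y - r := dvd_trans (pow_dvd_pow _ (by omega)) hyr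
    have h10 : ((p : ℤ) ^ (a - 1)) ∣ r - x := ⟨j, by rw [hr]; ring⟩
    have h12 := dvd_add h9 h10
    rw [show y - r + (r - x) = y - x from by ring] at h12
    rw [show x - y = -(y - x) from by ring]
    exact dvd_neg.mpr h12
  have hcop2 : IsCoprime ((p : ℤ) ^ (a - 1)) (m : ℤ) := by
    have h := Nat.isCoprime_iff_coprime.mpr
      (Nat.Coprime.pow_left (a - 1) ((hp.coprime_iff_not_dvd).mpr hpm))
    exact_mod_cast h
  have hxy : ((p : ℤ) ^ (a - 1) * m) ∣ x - y := hcop2.mul_dvd hxp hym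
  have hxyc : ((c.2 : ℤ)) ∣ x - y := by
    refine dvd_trans ?_ hxy
    have := Int.natCast_dvd_natCast.mpr hdvd2
    convert this using 1
    exacts [rfl, by push_cast; ring]
  calc x ≡ y [ZMOD (c.2 : ℤ)] := (Int.modEq_iff_dvd.mpr (by
        have : y - x = -(x - y) := by ring
        rw [this]; exact dvd_neg.mpr hxyc))
    _ ≡ c.1 [ZMOD (c.2 : ℤ)] := hyc
end

section
/- Let C be a covering system, let p be a prime, and let r be an integer with 0 ≤ r ≤ p − 1. Then for every integer y, at least one of the following holds: (1) there is a congruence x ≡ a (mod n) in C with p ∤ n such that p·y ≡ a − r (mod n) (which, since p is invertible modulo n, is a single congruence condition on y modulo n), or (2) there is a congruence x ≡ a (mod n) in C with p | n and a ≡ r (mod p) such that y ≡ (a − r)/p (mod n/p). In particular, the congruences on y arising in (1) (one for each congruence of C with modulus coprime to p, with the same modulus n) together with those arising in (2) (one for each congruence of C with modulus divisible by p and residue congruent to r modulo p, with modulus n/p) form a covering system. -/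
/-- Reducing a covering system modulo a prime `p`: substituting `x = p y + r`, every
integer `y` satisfies either a congruence coming from a modulus coprime to `p`
(namely `p y ≡ a - r (mod n)`), or a congruence coming from a modulus divisible by `p`
whose residue is `≡ r (mod p)` (namely `y ≡ (a - r)/p (mod n/p)`). -/
theorem reduce_mod_p (C : Finset (ℤ × ℕ)) (hC : IsCoveringSystem C)
    (p : ℕ) (hp : p.Prime) (r : ℤ) (hr0 : 0 ≤ r) (hr1 : r ≤ (p : ℤ) - 1) (y : ℤ) :
    (∃ c ∈ C, ¬ p ∣ c.2 ∧ (p : ℤ) * y ≡ c.1 - r [ZMOD (c.2 : ℤ)]) ∨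
    (∃ c ∈ C, p ∣ c.2 ∧ c.1 ≡ r [ZMOD (p : ℤ)] ∧
      y ≡ (c.1 - r) / (p : ℤ) [ZMOD ((c.2 / p : ℕ) : ℤ)]) := by
  obtain ⟨hpos, hcov⟩ := hC
  obtain ⟨c, hcC, hc⟩ := hcov ((p : ℤ) * y + r)
  have hp0 : (p : ℤ) ≠ 0 := Int.natCast_ne_zero.mpr hp.ne_zero
  by_cases hdvd : p ∣ c.2
  · right
    have hpz : (p : ℤ) ∣ (c.2 : ℤ) := Int.natCast_dvd_natCast.mpr hdvd
    have h1 : (p : ℤ) * y + r ≡ c.1 [ZMOD (p : ℤ)] := hc.of_dvd hpz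
    have h2 : c.1 ≡ r [ZMOD (p : ℤ)] := by
      have : (p : ℤ) * y + r ≡ r [ZMOD (p : ℤ)] := by
        have : (p : ℤ) ∣ ((p : ℤ) * y + r) - r := by
          simp [mul_comm]
        exact Int.ModEq.symm (Int.modEq_iff_dvd.mpr (by simpa using this))
      exact (this.symm.trans h1).symm
    refine ⟨c, hcC, hdvd, h2, ?_⟩
    -- p ∣ c.1 - r
    obtain ⟨k, hk⟩ : (p : ℤ) ∣ c.1 - r := Int.ModEq.dvd h2.symm
    have hkval : (c.1 - r) / (p : ℤ) = k := by rw [hk]; exact Int.mul_ediv_cancel_left k hp0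
    -- c.2 ∣ c.1 - (p*y + r)
    have hd : (c.2 : ℤ) ∣ c.1 - ((p : ℤ) * y + r) := Int.ModEq.dvd hc
    obtain ⟨m, hm⟩ := hdvd
    have hmz : (c.2 : ℤ) = (p : ℤ) * m := by exact_mod_cast hm
    have : (p : ℤ) * (m : ℤ) ∣ (p : ℤ) * (k - y) := by
      rw [← hmz]
      have : c.1 - ((p : ℤ) * y + r) = (p : ℤ) * (k - y) := by
        have : c.1 - r = (p : ℤ) * k := hk
        ring_nf
        linarith [hk]
      rw [← this]; exact hd
    have hmy : (m : ℤ) ∣ k - y := (mul_dvd_mul_iff_left hp0).mp this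
    rw [hkval]
    have hm2 : c.2 / p = m := by rw [hm]; exact Nat.mul_div_cancel_left m hp.pos
    rw [hm2]
    exact Int.modEq_iff_dvd.mpr hmy
  · left
    refine ⟨c, hcC, hdvd, ?_⟩
    have := hc.sub_right r
    simpa using this
end

section
/- Let m ≥ 3 be an integer and let C be a minimal distinct covering system all of whose moduli lie in the interval [m, 10m], i.e., a distinct covering system no proper subset of which is a covering system. Then every prime divisor of every modulus of C is less than √(9m + 1). -/
/-- CRT lemma: if a finite set of congruences with moduli coprime to `M` covers a full
residue class mod `M`, then it covers all integers. -/
lemma cover_of_class (D : Finset (ℤ × ℕ)) (hpos : ∀ c ∈ D, 0 < c.2)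
    (M : ℕ) (hcop : ∀ c ∈ D, Nat.Coprime c.2 M) (r : ℤ)
    (hcov : ∀ x : ℤ, (M : ℤ) ∣ x - r → ∃ c ∈ D, (c.2 : ℤ) ∣ c.1 - x) :
    IsCoveringSystem D := by
  refine ⟨hpos, fun x => ?_⟩
  set N : ℕ := ∏ c ∈ D, c.2 with hN
  have hcopMN : Nat.Coprime M N := Nat.Coprime.prod_right fun c hc => (hcop c hc).symm
  have hic : IsCoprime (M : ℤ) (N : ℤ) := Nat.isCoprime_iff_coprime.mpr hcopMN
  obtain ⟨u, v, huv⟩ := hic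
  set y : ℤ := r + M * (u * (x - r)) with hy
  have hMy : (M : ℤ) ∣ y - r := ⟨u * (x - r), by rw [hy]; ring⟩
  have hNy : (N : ℤ) ∣ x - y := ⟨v * (x - r), by rw [hy]; linear_combination (r - x) * huv⟩
  obtain ⟨c, hcD, hdvd⟩ := hcov y hMy
  have hcN : (c.2 : ℤ) ∣ (N : ℤ) :=
    Int.natCast_dvd_natCast.mpr (Finset.dvd_prod_of_mem _ hcD)
  have hfin : (c.2 : ℤ) ∣ c.1 - x := by
    have h2 := dvd_add hdvd (hcN.trans hNy)
    have h3 : c.1 - y + (x - y) = c.1 - x + (2 * (x - y)) := by ring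
    have h4 : c.1 - y + (x - y) - 2 * (x - y) = c.1 - x := by ring
    calc (c.2 : ℤ) ∣ c.1 - y + (x - y) - 2 * (x - y) :=
          dvd_sub h2 ((hcN.trans hNy).mul_left 2)
      _ = c.1 - x := h4
  exact ⟨c, hcD, Int.modEq_iff_dvd.mpr hfin⟩

lemma arith1 (m q : ℕ) (hq : 0 < q) (hm : 1 ≤ m) (h : 9 * m + 1 ≤ q * q) :
    10 * m / q < q + ((m - 1) / q + 1) := by
  rw [Nat.div_lt_iff_lt_mul hq]
  have key : 10 * m < q * q + q * ((m - 1) / q) + q := by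
    have hd := Nat.div_add_mod (m - 1) q
    have hr : (m - 1) % q < q := Nat.mod_lt _ hq
    generalize q * ((m - 1) / q) = B at hd ⊢
    generalize (m - 1) % q = R at hd hr
    generalize q * q = A at h ⊢
    omega
  calc 10 * m < q * q + q * ((m - 1) / q) + q := key
    _ = (q + ((m - 1) / q + 1)) * q := by ring

/-- If `C` is a minimal distinct covering system with all moduli in `[m, 10m]` for
`m ≥ 3`, then every prime divisor of every modulus of `C` is less than `√(9m + 1)`. -/
theorem prime_divisors_small (m : ℕ) (hm : 3 ≤ m) (C : Finset (ℤ × ℕ))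
    (hC : IsDistinctCoveringSystem C)
    (hmod : ∀ c ∈ C, m ≤ c.2 ∧ c.2 ≤ 10 * m)
    (hmin : ∀ D ⊂ C, ¬ IsCoveringSystem D) :
    ∀ c ∈ C, ∀ q : ℕ, q.Prime → q ∣ c.2 → (q : ℝ) < Real.sqrt (9 * m + 1) := by
  classical
  intro c hc q hq hqd
  by_contra hcon
  push_neg at hcon
  have hqpos : 0 < q := hq.pos
  have hq1 : 1 < q := hq.one_lt
  have hq2 : 9 * m + 1 ≤ q * q := by
    have h0 : (0 : ℝ) ≤ 9 * (m : ℝ) + 1 := by positivity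
    have h2 : (9 * (m : ℝ) + 1) ≤ (q : ℝ) * (q : ℝ) := by
      nlinarith [Real.sq_sqrt h0, Real.sqrt_nonneg (9 * (m : ℝ) + 1), hcon]
    exact_mod_cast h2
  set S : Finset (ℤ × ℕ) := C.filter (fun c' => q ∣ c'.2) with hSdef
  have hcS : c ∈ S := Finset.mem_filter.mpr ⟨hc, hqd⟩
  have hSC : S ⊆ C := Finset.filter_subset _ _
  have hSq : ∀ c' ∈ S, q ∣ c'.2 := fun c' h => (Finset.mem_filter.mp h).2
  have hDss : C \ S ⊂ C := Finset.sdiff_ssubset hSC ⟨c, hcS⟩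
  -- the residue map mod q
  set ψ : ℤ × ℕ → ℤ := fun c' => c'.1 % (q : ℤ) with hψdef
  set I : Finset ℤ := S.image ψ with hIdef
  have hIsub : I ⊆ Finset.Ico (0 : ℤ) (q : ℤ) := by
    intro z hz
    obtain ⟨c', _, rfl⟩ := Finset.mem_image.mp hz
    refine Finset.mem_Ico.mpr ⟨Int.emod_nonneg _ ?_, Int.emod_lt_of_pos _ ?_⟩
    · exact_mod_cast hqpos.ne'
    · exact_mod_cast hqpos
  -- key step: find a class mod q^e avoided by all congruences in S
  obtain ⟨e, r, hbad⟩ : ∃ (e : ℕ) (r : ℤ), ∀ c' ∈ S, ∀ x : ℤ,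
      ((q : ℤ) ^ e ∣ x - r) → ¬ ((c'.2 : ℤ) ∣ c'.1 - x) := by
    by_cases hA : ∃ z ∈ Finset.Ico (0 : ℤ) (q : ℤ), z ∉ I
    · -- Case A: some residue class mod q is missed
      obtain ⟨z, hz, hzI⟩ := hA
      obtain ⟨h0z, hzq⟩ := Finset.mem_Ico.mp hz
      refine ⟨1, z, fun c' hc'S x hx hdvd => ?_⟩
      rw [pow_one] at hx
      have h1 : (q : ℤ) ∣ c'.1 - x :=
        (Int.natCast_dvd_natCast.mpr (hSq c' hc'S)).trans hdvd
      have h3 : (q : ℤ) ∣ c'.1 - z := by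
        have : c'.1 - z = (c'.1 - x) + (x - z) := by ring
        rw [this]; exact dvd_add h1 hx
      have heq : ψ c' = z := by
        have hmod' : c'.1 % (q : ℤ) = z % (q : ℤ) :=
          Int.modEq_iff_dvd.mpr (by simpa using (dvd_neg.mpr h3))
        show c'.1 % (q : ℤ) = z
        rw [hmod', Int.emod_eq_of_lt h0z hzq]
      exact hzI (Finset.mem_image.mpr ⟨c', hc'S, heq⟩)
    · -- Case B: all residues mod q are hit; then |S| = q and residues are distinct
      push_neg at hA
      have hIeq : I = Finset.Ico (0 : ℤ) (q : ℤ) := Finset.Subset.antisymm hIsub hA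
      have hIcard : I.card = q := by
        rw [hIeq, Int.card_Ico]; simp
      -- counting: S has at most q elements
      obtain ⟨a, ha⟩ : ∃ a : ℕ, a = (m - 1) / q + 1 := ⟨_, rfl⟩
      obtain ⟨b, hb⟩ : ∃ b : ℕ, b = 10 * m / q := ⟨_, rfl⟩
      have hfmem : ∀ c' ∈ S, c'.2 / q ∈ Finset.Icc a b := by
        intro c' hc'S
        obtain ⟨hml, hmu⟩ := hmod c' (hSC hc'S)
        refine Finset.mem_Icc.mpr ⟨?_, ?_⟩
        · have h2 : (m - 1) / q < c'.2 / q :=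
            Nat.div_lt_div_of_lt_of_dvd (hSq c' hc'S) (by omega)
          omega
        · rw [hb]; exact Nat.div_le_div_right hmu
      have hfinj : Set.InjOn (fun c' : ℤ × ℕ => c'.2 / q) ↑S := by
        intro c₁ h1 c₂ h2 heq
        have e1 : q * (c₁.2 / q) = c₁.2 := Nat.mul_div_cancel' (hSq c₁ h1)
        have e2 : q * (c₂.2 / q) = c₂.2 := Nat.mul_div_cancel' (hSq c₂ h2)
        simp only at heq
        by_contra hne
        exact hC.2.2 c₁ (hSC h1) c₂ (hSC h2) hne (by rw [← e1, ← e2, heq])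
      have hbalt : b + 1 ≤ q + a := by
        have h5 := arith1 m q hqpos (by omega) hq2
        rw [ha, hb]
        exact h5
      have hcard_image : (S.image (fun c' : ℤ × ℕ => c'.2 / q)).card = S.card :=
        Finset.card_image_of_injOn hfinj
      have himsub : S.image (fun c' : ℤ × ℕ => c'.2 / q) ⊆ Finset.Icc a b := by
        intro z hz; obtain ⟨c', hc', rfl⟩ := Finset.mem_image.mp hz
        exact hfmem c' hc'
      have hcardS_le : S.card ≤ q := by
        have h5 := Finset.card_le_card himsub
        rw [Nat.card_Icc] at h5
        omega
      have hq_le : q ≤ S.card := by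
        have h6 := Finset.card_image_le (s := S) (f := ψ)
        rw [← hIdef, hIcard] at h6
        exact h6
      have hScard : S.card = q := le_antisymm hcardS_le hq_le
      have hψinj : Set.InjOn ψ ↑S := by
        apply Finset.card_image_iff.mp
        rw [← hIdef, hIcard, hScard]
      -- the image of f is exactly Icc a b, which contains a multiple of q
      have hIccfull : S.image (fun c' : ℤ × ℕ => c'.2 / q) = Finset.Icc a b := by
        apply Finset.eq_of_subset_of_card_le himsub
        rw [Nat.card_Icc, hcard_image, hScard]
        omega
      have hcard_eq : b + 1 - a = q := by
        have h7 : (Finset.Icc a b).card = q := by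
          rw [← hIccfull, hcard_image, hScard]
        rwa [Nat.card_Icc] at h7
      have hab : a ≤ b := by
        have h8 : 0 < (Finset.Icc a b).card := by
          rw [← hIccfull, hcard_image, hScard]; omega
        rw [Nat.card_Icc] at h8; omega
      -- find the multiple of q in Icc a b
      obtain ⟨k₀, hk₀⟩ : ∃ k : ℕ, k = q * ((a + q - 1) / q) := ⟨_, rfl⟩
      have hk₀mem : k₀ ∈ Finset.Icc a b := by
        have hd := Nat.div_add_mod (a + q - 1) q
        have hr : (a + q - 1) % q < q := Nat.mod_lt _ hqpos
        rw [← hk₀] at hd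
        refine Finset.mem_Icc.mpr ?_
        generalize (a + q - 1) % q = R at hd hr
        omega
      obtain ⟨c₁, hc₁S, hfc₁⟩ := Finset.mem_image.mp (hIccfull ▸ hk₀mem)
      have hfc₁' : c₁.2 / q = k₀ := hfc₁
      have hq2dvd : q * q ∣ c₁.2 := by
        have e1 : q * (c₁.2 / q) = c₁.2 := Nat.mul_div_cancel' (hSq c₁ hc₁S)
        exact ⟨(a + q - 1) / q, by rw [← e1, hfc₁', hk₀]; ring⟩
      -- the avoided class: r = c₁.1 + q mod q²
      refine ⟨2, c₁.1 + (q : ℤ), fun c' hc'S x hx hdvd => ?_⟩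
      have hqq : ((q : ℤ)) ∣ (q : ℤ) ^ 2 := dvd_pow_self _ two_ne_zero
      have h1 : (q : ℤ) ∣ c'.1 - x :=
        (Int.natCast_dvd_natCast.mpr (hSq c' hc'S)).trans hdvd
      have h2 : (q : ℤ) ∣ x - (c₁.1 + q) := hqq.trans hx
      have h3 : (q : ℤ) ∣ c'.1 - c₁.1 := by
        have h3' : c'.1 - c₁.1 = (c'.1 - x) + (x - (c₁.1 + q)) + q := by ring
        rw [h3']; exact dvd_add (dvd_add h1 h2) dvd_rfl
      have heq : ψ c' = ψ c₁ := by
        show c'.1 % (q : ℤ) = c₁.1 % (q : ℤ)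
        exact Int.modEq_iff_dvd.mpr (by simpa using (dvd_neg.mpr h3))
      have hcc : c' = c₁ := hψinj (Finset.mem_coe.mpr hc'S) (Finset.mem_coe.mpr hc₁S) heq
      subst hcc
      have h4 : (q : ℤ) ^ 2 ∣ c'.1 - x := by
        refine dvd_trans ?_ hdvd
        have h4' : ((q * q : ℕ) : ℤ) ∣ (c'.2 : ℤ) := Int.natCast_dvd_natCast.mpr hq2dvd
        push_cast at h4'
        calc (q : ℤ) ^ 2 = (q : ℤ) * q := pow_two (q : ℤ)
          _ ∣ (c'.2 : ℤ) := h4'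
      have h5 : (q : ℤ) ^ 2 ∣ (q : ℤ) := by
        have h6 : (q : ℤ) ^ 2 ∣ (c'.1 - x) + (x - (c'.1 + q)) := dvd_add h4 hx
        have h7 : (c'.1 - x) + (x - (c'.1 + q)) = -q := by ring
        rw [h7] at h6
        exact (dvd_neg.mp h6)
      have h8 : (q : ℤ) ^ 2 ≤ (q : ℤ) := Int.le_of_dvd (by exact_mod_cast hqpos) h5
      have h9 : (2 : ℤ) ≤ (q : ℤ) := by exact_mod_cast hq.two_le
      nlinarith
  -- now C \ S is a covering system, contradicting minimality
  refine hmin (C \ S) hDss ?_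
  apply cover_of_class (C \ S)
    (fun c' hc' => hC.1.1 c' (Finset.mem_sdiff.mp hc').1) (q ^ e) ?_ r ?_
  · intro c' hc'
    obtain ⟨hc'C, hc'nS⟩ := Finset.mem_sdiff.mp hc'
    have hnd : ¬ q ∣ c'.2 := fun hd => hc'nS (Finset.mem_filter.mpr ⟨hc'C, hd⟩)
    exact Nat.Coprime.pow_right e ((hq.coprime_iff_not_dvd.mpr hnd).symm)
  · intro x hx
    push_cast at hx
    obtain ⟨c', hc'C, hc'cov⟩ := hC.1.2 x
    have hdvd : (c'.2 : ℤ) ∣ c'.1 - x := Int.ModEq.dvd hc'cov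
    by_cases hcs : c' ∈ S
    · exact absurd hdvd (hbad c' hcs x hx)
    · exact ⟨c', Finset.mem_sdiff.mpr ⟨hc'C, hcs⟩, hdvd⟩
end

section
/- Let m ≥ 3 be an integer. If there exists a distinct covering system all of whose moduli lie in the interval [m, 10m], then the sum of 1/n over all integers n with m ≤ n ≤ 10m and P(n) < √(9m + 1) is at least 1, where P(n) denotes the largest prime divisor of n (with P(1) = 1). -/
/-- `P n` is the largest prime divisor of `n`, with the convention `P 1 = 1`. -/
def maxPrimeFac (n : ℕ) : ℕ := max 1 (n.primeFactors.sup id)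



lemma card_filter_mod (N n b : ℕ) (hn : 0 < n) (hdvd : n ∣ N) (hb : b < n) :
    ((Finset.range N).filter (fun x => x % n = b)).card = N / n := by
  have himg : (Finset.range N).filter (fun x => x % n = b)
      = (Finset.range (N / n)).image (fun y => n * y + b) := by
    ext x
    simp only [Finset.mem_filter, Finset.mem_range, Finset.mem_image]
    constructor
    · rintro ⟨hxN, hxb⟩
      refine ⟨x / n, ?_, ?_⟩
      · have : x < n * (N / n) := by
          rwa [Nat.mul_div_cancel' hdvd]
        exact Nat.div_lt_of_lt_mul (by omega)
      · rw [← hxb]; exact Nat.div_add_mod x n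
    · rintro ⟨y, hy, rfl⟩
      constructor
      · have h1 : n * (y + 1) ≤ n * (N / n) := Nat.mul_le_mul_left n (by omega)
        rw [Nat.mul_div_cancel' hdvd] at h1
        have h2 : n * (y + 1) = n * y + n := by ring
        omega
      · rw [Nat.mul_add_mod, Nat.mod_eq_of_lt hb]
  rw [himg, Finset.card_image_of_injective _
    (fun y z h => Nat.eq_of_mul_eq_mul_left hn (by omega)), Finset.card_range]

lemma card_filter_intmod (N n : ℕ) (a : ℤ) (hn : 0 < n) (hdvd : n ∣ N) :
    ((Finset.range N).filter (fun x : ℕ => (x : ℤ) ≡ a [ZMOD (n : ℤ)])).card = N / n := by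
  have hb : (a % (n : ℤ)).toNat < n := by
    have h1 : 0 ≤ a % (n : ℤ) := Int.emod_nonneg a (by positivity)
    have h2 : a % (n : ℤ) < n := Int.emod_lt_of_pos a (by exact_mod_cast hn)
    omega
  have key : ∀ x : ℕ, ((x : ℤ) ≡ a [ZMOD (n : ℤ)]) ↔ x % n = (a % (n : ℤ)).toNat := by
    intro x
    rw [Int.ModEq]
    constructor
    · intro h
      have : ((x % n : ℕ) : ℤ) = a % (n : ℤ) := by push_cast; rw [← h]
      omega
    · intro h
      have h2 : ((x % n : ℕ) : ℤ) = a % (n : ℤ) := by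
        rw [h]
        have h1 : 0 ≤ a % (n : ℤ) := Int.emod_nonneg a (by positivity)
        omega
      push_cast at h2
      omega
  simp only [key]
  exact card_filter_mod N n _ hn hdvd hb

lemma covering_sum (C : Finset (ℤ × ℕ)) (hpos : ∀ c ∈ C, 0 < c.2)
    (hcov : ∀ x : ℤ, ∃ c ∈ C, x ≡ c.1 [ZMOD (c.2 : ℤ)]) :
    (1 : ℝ) ≤ ∑ c ∈ C, 1 / (c.2 : ℝ) := by
  classical
  set N : ℕ := ∏ c ∈ C, c.2 with hN
  have hNpos : 0 < N := Finset.prod_pos hpos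
  have hdvd : ∀ c ∈ C, c.2 ∣ N := fun c hc => Finset.dvd_prod_of_mem _ hc
  have hsub : Finset.range N ⊆ C.biUnion
      (fun c => (Finset.range N).filter (fun x : ℕ => (x : ℤ) ≡ c.1 [ZMOD (c.2 : ℤ)])) := by
    intro x hx
    obtain ⟨c, hc, hcx⟩ := hcov (x : ℤ)
    exact Finset.mem_biUnion.mpr ⟨c, hc, Finset.mem_filter.mpr ⟨hx, hcx⟩⟩
  have hcard : N ≤ ∑ c ∈ C, N / c.2 := by
    calc N = (Finset.range N).card := (Finset.card_range N).symm
    _ ≤ _ := Finset.card_le_card hsub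
    _ ≤ ∑ c ∈ C, ((Finset.range N).filter
        (fun x : ℕ => (x : ℤ) ≡ c.1 [ZMOD (c.2 : ℤ)])).card := Finset.card_biUnion_le
    _ = ∑ c ∈ C, N / c.2 := by
        refine Finset.sum_congr rfl fun c hc => ?_
        exact card_filter_intmod N c.2 c.1 (hpos c hc) (hdvd c hc)
  have hreal : (N : ℝ) ≤ ∑ c ∈ C, (N : ℝ) / (c.2 : ℝ) := by
    calc (N : ℝ) ≤ ((∑ c ∈ C, N / c.2 : ℕ) : ℝ) := by exact_mod_cast hcard
    _ = ∑ c ∈ C, (N : ℝ) / (c.2 : ℝ) := by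
        push_cast
        refine Finset.sum_congr rfl fun c hc => ?_
        exact_mod_cast Nat.cast_div (hdvd c hc) (by exact_mod_cast (hpos c hc).ne')
  have h2 : (N : ℝ) ≤ (N : ℝ) * ∑ c ∈ C, 1 / (c.2 : ℝ) := by
    rw [Finset.mul_sum]
    convert hreal using 2 with c hc
    ring
  have hNR : (0 : ℝ) < N := by exact_mod_cast hNpos
  nlinarith


lemma claimA' (m p : ℕ) (hp : 2 ≤ p) (hp2 : 9 * m + 1 ≤ p ^ 2) (C1 : Finset (ℤ × ℕ))
    (hmod : ∀ c ∈ C1, p ∣ c.2 ∧ ¬ p ^ 2 ∣ c.2 ∧ m ≤ c.2 ∧ c.2 ≤ 10 * m)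
    (hdm : ∀ c ∈ C1, ∀ c' ∈ C1, c ≠ c' → c.2 ≠ c'.2) :
    C1.card ≤ p - 1 := by
  classical
  have hppos : 0 < p := by omega
  have hpp : 9 * m + 1 ≤ p * p := by have h : p ^ 2 = p * p := by ring
                                     omega
  obtain ⟨lo, hlo⟩ : ∃ lo, lo = (m + p - 1) / p := ⟨_, rfl⟩
  obtain ⟨hi, hhi⟩ : ∃ hi, hi = (10 * m) / p := ⟨_, rfl⟩
  have hplo : m ≤ p * lo := by
    rw [hlo]
    have h1 := Nat.div_add_mod (m + p - 1) p
    have h2 := Nat.mod_lt (m + p - 1) hppos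
    omega
  have hphi : p * hi ≤ 10 * m := by
    rw [hhi]
    have h1 := Nat.div_add_mod (10 * m) p
    omega
  have hhilo : hi < lo + p := by
    refine Nat.lt_of_mul_lt_mul_left (a := p) ?_
    have h : p * (lo + p) = p * lo + p * p := by ring
    omega
  have hmemK : ∀ c ∈ C1, c.2 / p ∈ (Finset.Icc lo hi).filter (fun k => ¬ p ∣ k) := by
    intro c hc
    obtain ⟨hdvd, hnd2, hml, hmu⟩ := hmod c hc
    obtain ⟨k, hk⟩ := hdvd
    have hkd : c.2 / p = k := by rw [hk]; exact Nat.mul_div_cancel_left k hppos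
    rw [hkd]
    refine Finset.mem_filter.mpr ⟨Finset.mem_Icc.mpr ⟨?_, ?_⟩, ?_⟩
    · rw [hlo]
      have h2 : (m + p - 1) / p ≤ (p * k + (p - 1)) / p := Nat.div_le_div_right (by omega)
      have h3 : (p * k + (p - 1)) / p = k + (p - 1) / p := Nat.mul_add_div hppos k (p - 1)
      have h4 : (p - 1) / p = 0 := Nat.div_eq_of_lt (by omega)
      omega
    · rw [hhi, Nat.le_div_iff_mul_le hppos, Nat.mul_comm]
      omega
    · rintro ⟨j, rfl⟩
      exact hnd2 ⟨j, by rw [hk]; ring⟩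
  have hinj : Set.InjOn (fun c : ℤ × ℕ => c.2 / p) C1 := by
    intro c hc c' hc' h
    simp only at h
    by_contra hne
    have e1 : p * (c.2 / p) = c.2 := Nat.mul_div_cancel' (hmod c hc).1
    have e2 : p * (c'.2 / p) = c'.2 := Nat.mul_div_cancel' (hmod c' hc').1
    rw [h] at e1
    exact hdm c hc c' hc' hne (e1.symm.trans e2)
  have hcard : C1.card ≤ ((Finset.Icc lo hi).filter (fun k => ¬ p ∣ k)).card :=
    Finset.card_le_card_of_injOn _ hmemK hinj
  obtain ⟨k₀, hk₀⟩ : ∃ k₀, k₀ = p * ((lo + p - 1) / p) := ⟨_, rfl⟩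
  have hk₀lo : lo ≤ k₀ := by
    rw [hk₀]
    have h1 := Nat.div_add_mod (lo + p - 1) p
    have h2 := Nat.mod_lt (lo + p - 1) hppos
    omega
  have hk₀up : k₀ ≤ lo + p - 1 := by
    rw [hk₀]
    have h1 := Nat.div_add_mod (lo + p - 1) p
    omega
  by_cases hcase : k₀ ≤ hi
  · have hsubK : (Finset.Icc lo hi).filter (fun k => ¬ p ∣ k) ⊆ (Finset.Icc lo hi).erase k₀ := by
      intro k hk
      obtain ⟨hIcc, hnd⟩ := Finset.mem_filter.mp hk
      refine Finset.mem_erase.mpr ⟨?_, hIcc⟩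
      rintro rfl
      exact hnd ⟨_, hk₀⟩
    have h1 := Finset.card_le_card hsubK
    rw [Finset.card_erase_of_mem (Finset.mem_Icc.mpr ⟨hk₀lo, hcase⟩), Nat.card_Icc] at h1
    omega
  · have h1 : ((Finset.Icc lo hi).filter (fun k => ¬ p ∣ k)).card ≤ (Finset.Icc lo hi).card :=
      Finset.card_le_card (Finset.filter_subset _ _)
    rw [Nat.card_Icc] at h1
    omega

lemma claimB' (m p : ℕ) (hp : 2 ≤ p) (hp2 : 9 * m + 1 ≤ p ^ 2) (C2 : Finset (ℤ × ℕ))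
    (hmod : ∀ c ∈ C2, p ^ 2 ∣ c.2 ∧ m ≤ c.2 ∧ c.2 ≤ 10 * m)
    (hdm : ∀ c ∈ C2, ∀ c' ∈ C2, c ≠ c' → c.2 ≠ c'.2) :
    C2.card ≤ 1 := by
  classical
  obtain ⟨q, hq⟩ : ∃ q, q = p ^ 2 := ⟨_, rfl⟩
  have hq2 : 9 * m + 1 ≤ q := by omega
  have hqpos : 0 < q := by omega
  have hmod' : ∀ c ∈ C2, q ∣ c.2 ∧ m ≤ c.2 ∧ c.2 ≤ 10 * m := by
    intro c hc; rw [hq]; exact hmod c hc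
  clear hmod hq
  obtain ⟨lo, hlo⟩ : ∃ lo, lo = (m + q - 1) / q := ⟨_, rfl⟩
  obtain ⟨hi, hhi⟩ : ∃ hi, hi = (10 * m) / q := ⟨_, rfl⟩
  have hplo : m ≤ q * lo := by
    rw [hlo]
    have h1 := Nat.div_add_mod (m + q - 1) q
    have h2 := Nat.mod_lt (m + q - 1) hqpos
    omega
  have hphi : q * hi ≤ 10 * m := by
    rw [hhi]
    have h1 := Nat.div_add_mod (10 * m) q
    omega
  have hhilo : hi < lo + 1 := by
    refine Nat.lt_of_mul_lt_mul_left (a := q) ?_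
    have h : q * (lo + 1) = q * lo + q := by ring
    omega
  have hmemK : ∀ c ∈ C2, c.2 / q ∈ Finset.Icc lo hi := by
    intro c hc
    obtain ⟨hdvd, hml, hmu⟩ := hmod' c hc
    obtain ⟨k, hk⟩ := hdvd
    have hkd : c.2 / q = k := by rw [hk]; exact Nat.mul_div_cancel_left k hqpos
    rw [hkd]
    refine Finset.mem_Icc.mpr ⟨?_, ?_⟩
    · rw [hlo]
      have h2 : (m + q - 1) / q ≤ (q * k + (q - 1)) / q := Nat.div_le_div_right (by omega)
      have h3 : (q * k + (q - 1)) / q = k + (q - 1) / q := Nat.mul_add_div hqpos k (q - 1)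
      have h4 : (q - 1) / q = 0 := Nat.div_eq_of_lt (by omega)
      omega
    · rw [hhi, Nat.le_div_iff_mul_le hqpos, Nat.mul_comm]
      omega
  have hinj : Set.InjOn (fun c : ℤ × ℕ => c.2 / q) C2 := by
    intro c hc c' hc' h
    simp only at h
    by_contra hne
    have e1 : q * (c.2 / q) = c.2 := Nat.mul_div_cancel' (hmod' c hc).1
    have e2 : q * (c'.2 / q) = c'.2 := Nat.mul_div_cancel' (hmod' c' hc').1
    rw [h] at e1
    exact hdm c hc c' hc' hne (e1.symm.trans e2)
  have hcard : C2.card ≤ (Finset.Icc lo hi).card :=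
    Finset.card_le_card_of_injOn _ hmemK hinj
  rw [Nat.card_Icc] at hcard
  omega

lemma maxPrimeFac_spec (n : ℕ) (hn : 1 < n) :
    (maxPrimeFac n).Prime ∧ maxPrimeFac n ∣ n := by
  have hne : n.primeFactors.Nonempty := Nat.nonempty_primeFactors.mpr hn
  obtain ⟨b, hb, hsup⟩ := Finset.exists_mem_eq_sup _ hne id
  have hbp : b.Prime := Nat.prime_of_mem_primeFactors hb
  have hbd : b ∣ n := Nat.dvd_of_mem_primeFactors hb
  have : maxPrimeFac n = b := by
    rw [maxPrimeFac, hsup]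
    exact max_eq_right hbp.one_lt.le
  rw [this]
  exact ⟨hbp, hbd⟩


open scoped Classical in
theorem aux_sum (m : ℕ) (hm : 3 ≤ m) : ∀ k : ℕ, ∀ C : Finset (ℤ × ℕ),
    C.card ≤ k → IsDistinctCoveringSystem C → (∀ c ∈ C, m ≤ c.2 ∧ c.2 ≤ 10 * m) →
    1 ≤ ∑ n ∈ (Finset.Icc m (10 * m)).filter
        (fun n => (maxPrimeFac n : ℝ) < Real.sqrt (9 * (m : ℝ) + 1)), (1 : ℝ) / n := by
  intro k
  induction k with
  | zero =>
    intro C hcard hdcs _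
    obtain ⟨c, hc, -⟩ := hdcs.1.2 0
    rw [Nat.le_zero, Finset.card_eq_zero] at hcard
    subst hcard
    simp at hc
  | succ k ih =>
    intro C hcard ⟨⟨hpos, hcov⟩, hone, hdm⟩ hbounds
    by_cases hsmall : ∀ c ∈ C, (maxPrimeFac c.2 : ℝ) < Real.sqrt (9 * (m : ℝ) + 1)
    · -- all moduli have small largest prime factor
      have h1 : (1 : ℝ) ≤ ∑ c ∈ C, 1 / (c.2 : ℝ) := covering_sum C hpos hcov
      have himg : ∑ n ∈ C.image Prod.snd, (1 : ℝ) / n = ∑ c ∈ C, 1 / (c.2 : ℝ) :=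
        Finset.sum_image (fun c hc c' hc' h => by
          by_contra hne; exact hdm c hc c' hc' hne h)
      have hsub : C.image Prod.snd ⊆ (Finset.Icc m (10 * m)).filter
          (fun n => (maxPrimeFac n : ℝ) < Real.sqrt (9 * (m : ℝ) + 1)) := by
        intro n hn
        obtain ⟨c, hc, rfl⟩ := Finset.mem_image.mp hn
        exact Finset.mem_filter.mpr
          ⟨Finset.mem_Icc.mpr ⟨(hbounds c hc).1, (hbounds c hc).2⟩, hsmall c hc⟩
      calc (1:ℝ) ≤ ∑ c ∈ C, 1 / (c.2 : ℝ) := h1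
      _ = ∑ n ∈ C.image Prod.snd, (1 : ℝ) / n := himg.symm
      _ ≤ _ := Finset.sum_le_sum_of_subset_of_nonneg hsub
          (fun n _ _ => by positivity)
    · -- some modulus has a large prime factor p
      push_neg at hsmall
      obtain ⟨c₀, hc₀, hble⟩ := hsmall
      obtain ⟨pp, pdvd⟩ := maxPrimeFac_spec c₀.2 (hone c₀ hc₀)
      set p := maxPrimeFac c₀.2 with hpdef
      have hp2 : 9 * m + 1 ≤ p ^ 2 := by
        have h0 : (0:ℝ) ≤ 9 * (m:ℝ) + 1 := by positivity
        have h1 : (9 * (m:ℝ) + 1) ≤ (p:ℝ) ^ 2 := by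
          calc (9 * (m:ℝ) + 1) = Real.sqrt (9 * (m:ℝ) + 1) ^ 2 := (Real.sq_sqrt h0).symm
          _ ≤ (p:ℝ) ^ 2 := by
              apply pow_le_pow_left₀ (Real.sqrt_nonneg _) hble
        exact_mod_cast h1
      have hppos : 0 < p := pp.pos
      have hp2pos : 0 < p ^ 2 := by positivity
      have hptwo : 2 ≤ p := pp.two_le
      -- the bad residues mod p^2
      set Bad : Finset ℕ := (Finset.range (p ^ 2)).filter (fun r => ∃ c ∈ C,
        (p ^ 2 ∣ c.2 ∧ (r : ℤ) ≡ c.1 [ZMOD ((p ^ 2 : ℕ) : ℤ)]) ∨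
        (p ∣ c.2 ∧ ¬ p ^ 2 ∣ c.2 ∧ (r : ℤ) ≡ c.1 [ZMOD (p : ℤ)])) with hBad
      set Cp1 : Finset (ℤ × ℕ) := C.filter (fun c => p ∣ c.2 ∧ ¬ p ^ 2 ∣ c.2) with hCp1
      set Cp2 : Finset (ℤ × ℕ) := C.filter (fun c => p ^ 2 ∣ c.2) with hCp2
      have hBadsub : Bad ⊆ (Cp2.biUnion (fun c => (Finset.range (p ^ 2)).filter
            (fun r : ℕ => (r : ℤ) ≡ c.1 [ZMOD ((p ^ 2 : ℕ) : ℤ)]))) ∪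
          (Cp1.biUnion (fun c => (Finset.range (p ^ 2)).filter
            (fun r : ℕ => (r : ℤ) ≡ c.1 [ZMOD (p : ℤ)]))) := by
        intro x hx
        obtain ⟨hxr, c, hc, hcase⟩ := Finset.mem_filter.mp hx
        rcases hcase with ⟨h1, h2⟩ | ⟨h1, h2, h3⟩
        · exact Finset.mem_union_left _ (Finset.mem_biUnion.mpr
            ⟨c, Finset.mem_filter.mpr ⟨hc, h1⟩, Finset.mem_filter.mpr ⟨hxr, h2⟩⟩)
        · exact Finset.mem_union_right _ (Finset.mem_biUnion.mpr
            ⟨c, Finset.mem_filter.mpr ⟨hc, h1, h2⟩, Finset.mem_filter.mpr ⟨hxr, h3⟩⟩)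
      have hA : Cp1.card ≤ p - 1 := by
        apply claimA' m p hptwo hp2
        · intro c hc
          obtain ⟨hcC, h1, h2⟩ := Finset.mem_filter.mp hc
          exact ⟨h1, h2, (hbounds c hcC).1, (hbounds c hcC).2⟩
        · intro c hc c' hc' hne
          exact hdm c (Finset.mem_filter.mp hc).1 c' (Finset.mem_filter.mp hc').1 hne
      have hB : Cp2.card ≤ 1 := by
        apply claimB' m p hptwo hp2
        · intro c hc
          obtain ⟨hcC, h1⟩ := Finset.mem_filter.mp hc
          exact ⟨h1, (hbounds c hcC).1, (hbounds c hcC).2⟩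
        · intro c hc c' hc' hne
          exact hdm c (Finset.mem_filter.mp hc).1 c' (Finset.mem_filter.mp hc').1 hne
      have hBadcard : Bad.card < p ^ 2 := by
        have h1 : Bad.card ≤ Cp2.card * 1 + Cp1.card * p := by
          calc Bad.card ≤ _ := Finset.card_le_card hBadsub
          _ ≤ _ := Finset.card_union_le _ _
          _ ≤ (∑ c ∈ Cp2, ((Finset.range (p ^ 2)).filter
                (fun r : ℕ => (r : ℤ) ≡ c.1 [ZMOD ((p ^ 2 : ℕ) : ℤ)])).card) +
              (∑ c ∈ Cp1, ((Finset.range (p ^ 2)).filter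
                (fun r : ℕ => (r : ℤ) ≡ c.1 [ZMOD (p : ℤ)])).card) :=
            Nat.add_le_add Finset.card_biUnion_le Finset.card_biUnion_le
          _ = Cp2.card * 1 + Cp1.card * p := by
              congr 1
              · rw [Finset.sum_congr rfl (fun c _ => card_filter_intmod (p ^ 2) (p ^ 2) c.1
                      hp2pos dvd_rfl),
                    Finset.sum_const, Nat.div_self hp2pos, smul_eq_mul]
              · have hpq : p ^ 2 / p = p := by
                  rw [sq p]; exact Nat.mul_div_cancel_left p hppos
                rw [Finset.sum_congr rfl (fun c _ => card_filter_intmod (p ^ 2) p c.1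
                      hppos ⟨p, sq p⟩),
                    Finset.sum_const, hpq, smul_eq_mul]
        have h2 : Cp1.card * p ≤ (p - 1) * p := Nat.mul_le_mul_right p hA
        have h3 : p ^ 2 = p * p := sq p
        have h4 : (p - 1) * p + p = p * p := by
          have : (p - 1) + 1 = p := by omega
          calc (p-1) * p + p = ((p-1) + 1) * p := by ring
          _ = p * p := by rw [this]
        omega
      -- choose a good residue r
      have hBadsubrange : Bad ⊆ Finset.range (p ^ 2) := Finset.filter_subset _ _
      have hnonempty : (Finset.range (p ^ 2) \ Bad).Nonempty := by
        rw [← Finset.card_pos, Finset.card_sdiff_of_subset hBadsubrange, Finset.card_range]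
        omega
      obtain ⟨r, hr⟩ := hnonempty
      rw [Finset.mem_sdiff, Finset.mem_range] at hr
      obtain ⟨hrlt, hrbad⟩ := hr
      have hrgood : ∀ c ∈ C, ¬ ((p ^ 2 ∣ c.2 ∧ (r : ℤ) ≡ c.1 [ZMOD ((p ^ 2 : ℕ) : ℤ)]) ∨
          (p ∣ c.2 ∧ ¬ p ^ 2 ∣ c.2 ∧ (r : ℤ) ≡ c.1 [ZMOD (p : ℤ)])) := by
        intro c hc hP
        exact hrbad (Finset.mem_filter.mpr ⟨Finset.mem_range.mpr hrlt, c, hc, hP⟩)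
      -- congruences covering the progression r + p² t cannot have p ∣ modulus
      have hgood : ∀ t : ℤ, ∀ c ∈ C, ((r : ℤ) + (p : ℤ) ^ 2 * t) ≡ c.1 [ZMOD (c.2 : ℤ)] →
          ¬ p ∣ c.2 := by
        intro t c hc hmc hpdvd
        by_cases h2 : p ^ 2 ∣ c.2
        · have hd : ((p ^ 2 : ℕ) : ℤ) ∣ (c.2 : ℤ) := Int.natCast_dvd_natCast.mpr h2
          have h3 : ((r : ℤ) + (p:ℤ) ^ 2 * t) ≡ c.1 [ZMOD ((p ^ 2 : ℕ) : ℤ)] := hmc.of_dvd hd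
          have h4 : (r : ℤ) ≡ (r : ℤ) + (p:ℤ) ^ 2 * t [ZMOD ((p ^ 2 : ℕ) : ℤ)] := by
            rw [Int.modEq_iff_dvd]
            refine ⟨t, by push_cast; ring⟩
          exact hrgood c hc (Or.inl ⟨h2, h4.trans h3⟩)
        · have hd : ((p : ℕ) : ℤ) ∣ (c.2 : ℤ) := Int.natCast_dvd_natCast.mpr hpdvd
          have h3 : ((r : ℤ) + (p:ℤ) ^ 2 * t) ≡ c.1 [ZMOD ((p : ℕ) : ℤ)] := hmc.of_dvd hd
          have h4 : (r : ℤ) ≡ (r : ℤ) + (p:ℤ) ^ 2 * t [ZMOD ((p : ℕ) : ℤ)] := by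
            rw [Int.modEq_iff_dvd]
            refine ⟨(p:ℤ) * t, by push_cast; ring⟩
          exact hrgood c hc (Or.inr ⟨hpdvd, h2, h4.trans h3⟩)
      -- the reduced system
      set D : Finset (ℤ × ℕ) := C.filter (fun c => ¬ p ∣ c.2) with hD
      set f : ℤ × ℕ → ℤ × ℕ :=
        fun c => ((c.1 - (r : ℤ)) * Nat.gcdA (p ^ 2) c.2, c.2) with hf
      set C' : Finset (ℤ × ℕ) := D.image f with hC'
      have hDsub : D ⊆ C := Finset.filter_subset _ _
      have hDC : D.card < C.card := by
        apply Finset.card_lt_card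
        rw [Finset.ssubset_iff_of_subset hDsub]
        refine ⟨c₀, hc₀, ?_⟩
        simp only [hD, Finset.mem_filter]
        tauto
      have hC'card : C'.card ≤ k := by
        have h5 : C'.card ≤ D.card := Finset.card_image_le
        omega
      have hmemC' : ∀ d ∈ C', ∃ c, c ∈ D ∧ f c = d := by
        intro d hd
        obtain ⟨c, hc, hfc⟩ := Finset.mem_image.mp hd
        exact ⟨c, hc, hfc⟩
      -- C' is a distinct covering system
      have hpos' : ∀ d ∈ C', 0 < d.2 := by
        intro d hd
        obtain ⟨c, hc, rfl⟩ := hmemC' d hd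
        exact hpos c (hDsub hc)
      have hone' : ∀ d ∈ C', 1 < d.2 := by
        intro d hd
        obtain ⟨c, hc, rfl⟩ := hmemC' d hd
        exact hone c (hDsub hc)
      have hbounds' : ∀ d ∈ C', m ≤ d.2 ∧ d.2 ≤ 10 * m := by
        intro d hd
        obtain ⟨c, hc, rfl⟩ := hmemC' d hd
        exact hbounds c (hDsub hc)
      have hdm' : HasDistinctModuli C' := by
        intro d hd d' hd' hne
        obtain ⟨c, hc, rfl⟩ := hmemC' d hd
        obtain ⟨c', hc', rfl⟩ := hmemC' d' hd'
        intro heq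
        simp only [hf] at heq
        have hcc : c = c' := by
          by_contra hcc
          exact hdm c (hDsub hc) c' (hDsub hc') hcc heq
        exact hne (by rw [hcc])
      have hcov' : ∀ t : ℤ, ∃ d ∈ C', t ≡ d.1 [ZMOD (d.2 : ℤ)] := by
        intro t
        obtain ⟨c, hc, hmc⟩ := hcov ((r : ℤ) + (p : ℤ) ^ 2 * t)
        have hnp : ¬ p ∣ c.2 := hgood t c hc hmc
        refine ⟨f c, Finset.mem_image_of_mem f (Finset.mem_filter.mpr ⟨hc, hnp⟩), ?_⟩
        have hcop : Nat.Coprime (p ^ 2) c.2 :=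
          Nat.Coprime.pow_left 2 ((Nat.Prime.coprime_iff_not_dvd pp).mpr hnp)
        have hbez := Nat.gcd_eq_gcd_ab (p ^ 2) c.2
        rw [Nat.Coprime] at hcop
        rw [hcop] at hbez
        have hbez2 : (1 : ℤ) = (p : ℤ) ^ 2 * Nat.gcdA (p ^ 2) c.2
            + (c.2 : ℤ) * Nat.gcdB (p ^ 2) c.2 := by
          push_cast at hbez
          exact_mod_cast hbez
        obtain ⟨w, hw⟩ := Int.modEq_iff_dvd.mp hmc
        simp only [hf]
        rw [Int.modEq_iff_dvd]
        refine ⟨w * Nat.gcdA (p ^ 2) c.2 - t * Nat.gcdB (p ^ 2) c.2, ?_⟩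
        linear_combination (Nat.gcdA (p ^ 2) c.2) * hw - t * hbez2
      exact ih C' hC'card ⟨⟨hpos', hcov'⟩, hone', hdm'⟩ hbounds'


open scoped Classical in
/-- If there exists a distinct covering system all of whose moduli lie in `[m, 10m]`
(for `m ≥ 3`), then the sum of `1/n` over `m ≤ n ≤ 10m` with `P(n) < √(9m + 1)`
is at least `1`. -/
theorem reciprocal_sum_ge_one (m : ℕ) (hm : 3 ≤ m)
    (h : ∃ C : Finset (ℤ × ℕ), IsDistinctCoveringSystem C ∧
      ∀ c ∈ C, m ≤ c.2 ∧ c.2 ≤ 10 * m) :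
    1 ≤ ∑ n ∈ (Finset.Icc m (10 * m)).filter
        (fun n => (maxPrimeFac n : ℝ) < Real.sqrt (9 * (m : ℝ) + 1)), (1 : ℝ) / n := by
  obtain ⟨C, hdcs, hb⟩ := h
  exact aux_sum m hm C.card C le_rfl hdcs hb
end
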